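/- arXiv:1307.6662 — 5 statements merged into one kernel-verified Lean document; each statement's English description precedes it below -/
import Mathlib

section
/- Let G = PSL₂(q) with q > 2 even, and let C be the G-conjugacy class of a nontrivial semisimple element x whose order divides q − 1. Then C² = G. -/
open Matrix Polynomial
open scoped MatrixGroups Pointwise

set_option linter.unusedSectionVars false
set_option linter.unusedVariables false
set_option maxHeartbeats 1000000

namespace PSL2Aux

variable {F : Type*} [Field F] [CharP F 2]

def M2 (a b c d : F) (h : a * d - b * c = 1) : SL(2, F) :=
  ⟨!![a, b; c, d], by rw [Matrix.det_fin_two_of]; exact h⟩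

@[simp] lemma M2_coe (a b c d : F) (h) :
    ((M2 a b c d h : SL(2, F)) : Matrix (Fin 2) (Fin 2) F) = !![a, b; c, d] := rfl

lemma h2 : (2 : F) = 0 := CharTwo.two_eq_zero

def D (t α : F) (hα : α * α + t * α + 1 = 0) : SL(2, F) :=
  M2 α 0 0 (α + t) (by linear_combination hα - (h2 (F := F)))

lemma isConj_D (t α : F) (ht : t ≠ 0) (hα : α * α + t * α + 1 = 0)
    (A : SL(2, F))
    (htr : (A : Matrix (Fin 2) (Fin 2) F) 0 0 + (A : Matrix (Fin 2) (Fin 2) F) 1 1 = t) :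
    IsConj (D t α hα) A := by
  have two0 : (2 : F) = 0 := h2
  set a := (A : Matrix (Fin 2) (Fin 2) F) 0 0 with ha
  set b := (A : Matrix (Fin 2) (Fin 2) F) 0 1 with hb
  set c := (A : Matrix (Fin 2) (Fin 2) F) 1 0 with hc
  set d := (A : Matrix (Fin 2) (Fin 2) F) 1 1 with hd
  have hA : (A : Matrix (Fin 2) (Fin 2) F) = !![a, b; c, d] := by
    rw [Matrix.eta_fin_two (A : Matrix (Fin 2) (Fin 2) F)]
  have hdet : a * d - b * c = 1 := by
    have h := A.2
    rw [Matrix.det_fin_two] at h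
    exact h
  suffices h : ∃ P : SL(2, F), P * D t α hα = A * P by
    obtain ⟨P, hP⟩ := h
    exact isConj_iff.mpr ⟨P, by rw [mul_inv_eq_iff_eq_mul]; exact hP⟩
  by_cases hcz : c = 0
  · have hdet0 : a * d = 1 := by linear_combination hdet + b * hcz
    have hroots : (a + α) * ((a + α) + t) = 0 := by
      linear_combination hα + hdet0 + a * htr + (a*α + a*t - a*d) * two0
    have hcase : (a = α ∧ d = α + t) ∨ (a = α + t ∧ d = α) := by
      rcases mul_eq_zero.mp hroots with h | h
      · exact Or.inl ⟨by linear_combination h - α * two0, by linear_combination htr - h⟩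
      · exact Or.inr ⟨by linear_combination h - (α + t) * two0,
          by linear_combination htr - h + t * two0⟩
    rcases hcase with ⟨haa, hdd⟩ | ⟨haa, hdd⟩
    · by_cases hbz : b = 0
      · refine ⟨1, ?_⟩
        rw [one_mul, mul_one]
        apply Subtype.ext
        rw [hA, haa, hdd, hbz, hcz]
        rfl
      · refine ⟨M2 1 (b/t) 0 1 (by ring), ?_⟩
        apply Subtype.ext
        simp only [Matrix.SpecialLinearGroup.coe_mul, M2_coe, D, hA, haa, hdd, hbz, hcz,
          Matrix.mul_fin_two]
        ext i j
        fin_cases i <;> fin_cases j <;> simp only [Matrix.cons_val', Matrix.cons_val_zero,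
          Matrix.cons_val_one, Matrix.head_cons, Matrix.head_fin_const, Matrix.empty_val',
          Matrix.cons_val_fin_one, Matrix.of_apply, Fin.zero_eta, Fin.mk_one] <;> field_simp <;> ring
    · by_cases hbz : b = 0
      · refine ⟨M2 0 1 1 0 (by linear_combination -two0), ?_⟩
        apply Subtype.ext
        simp only [Matrix.SpecialLinearGroup.coe_mul, M2_coe, D, hA, haa, hdd, hbz, hcz,
          Matrix.mul_fin_two]
        ext i j
        fin_cases i <;> fin_cases j <;> simp only [Matrix.cons_val', Matrix.cons_val_zero,
          Matrix.cons_val_one, Matrix.head_cons, Matrix.head_fin_const, Matrix.empty_val',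
          Matrix.cons_val_fin_one, Matrix.of_apply, Fin.zero_eta, Fin.mk_one] <;> field_simp <;> ring
      · refine ⟨M2 b (1/t) t 0 (by field_simp; linear_combination -two0), ?_⟩
        apply Subtype.ext
        simp only [Matrix.SpecialLinearGroup.coe_mul, M2_coe, D, hA, haa, hdd, hcz,
          Matrix.mul_fin_two]
        ext i j
        fin_cases i <;> fin_cases j <;> simp only [Matrix.cons_val', Matrix.cons_val_zero,
          Matrix.cons_val_one, Matrix.head_cons, Matrix.head_fin_const, Matrix.empty_val',
          Matrix.cons_val_fin_one, Matrix.of_apply, Fin.zero_eta, Fin.mk_one] <;> field_simp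
        case _ => linear_combination (-t^2*b)*two0
        case _ => ring
        all_goals ring
  · refine ⟨M2 (α + d) ((α + t + d)/(c*t)) c (1/t) ?_, ?_⟩
    · field_simp
      linear_combination (-t)*two0
    · apply Subtype.ext
      simp only [Matrix.SpecialLinearGroup.coe_mul, M2_coe, D, hA, Matrix.mul_fin_two]
      ext i j
      fin_cases i <;> fin_cases j <;> simp only [Matrix.cons_val', Matrix.cons_val_zero,
        Matrix.cons_val_one, Matrix.head_cons, Matrix.head_fin_const, Matrix.empty_val',
        Matrix.cons_val_fin_one, Matrix.of_apply, Fin.zero_eta, Fin.mk_one] <;> field_simp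
      · linear_combination (t*c)*hα + (-t*c)*hdet + (α*t*c)*htr + (-t*c - t*b*c^2 - α*t*a*c)*two0
      · linear_combination (1)*hα + (1)*hdet + (t + α)*htr + (-a*d - t*a + t^2 - α*a + α*t)*two0
      · linear_combination (-t*c*d)*two0
      · linear_combination (-d)*two0

lemma mat2_ext {a b c d e f g h : F} (h1 : a = e) (h2 : b = f) (h3 : c = g) (h4 : d = h) :
    (!![a, b; c, d] : Matrix (Fin 2) (Fin 2) F) = !![e, f; g, h] := by
  rw [h1, h2, h3, h4]

end PSL2Aux

namespace PSL2Aux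

variable {F : Type*} [Field F] [CharP F 2]

lemma exists_factorization (t α : F) (ht : t ≠ 0) (hα : α * α + t * α + 1 = 0)
    (g : SL(2, F)) :
    ∃ A B : SL(2, F), A * B = g ∧
      (A : Matrix (Fin 2) (Fin 2) F) 0 0 + (A : Matrix (Fin 2) (Fin 2) F) 1 1 = t ∧
      (B : Matrix (Fin 2) (Fin 2) F) 0 0 + (B : Matrix (Fin 2) (Fin 2) F) 1 1 = t := by
  have two0 : (2 : F) = 0 := h2
  set p := (g : Matrix (Fin 2) (Fin 2) F) 0 0 with hp'
  set q := (g : Matrix (Fin 2) (Fin 2) F) 0 1 with hq'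
  set r := (g : Matrix (Fin 2) (Fin 2) F) 1 0 with hr'
  set s := (g : Matrix (Fin 2) (Fin 2) F) 1 1 with hs'
  have hg : (g : Matrix (Fin 2) (Fin 2) F) = !![p, q; r, s] := by
    rw [Matrix.eta_fin_two (g : Matrix (Fin 2) (Fin 2) F)]
  have hdet : p * s - q * r = 1 := by
    have h := g.2
    rw [Matrix.det_fin_two] at h
    exact h
  by_cases hq : q = 0
  · by_cases hr : r = 0
    · by_cases hp : p = 1
      · have hs : s = 1 := by linear_combination hdet - s*hp + r*hq
        refine ⟨M2 α 0 0 (α+t) (by linear_combination hα - two0),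
          M2 (α+t) 0 0 α (by linear_combination hα - two0), ?_, ?_, ?_⟩
        · apply Subtype.ext
          simp only [Matrix.SpecialLinearGroup.coe_mul, M2_coe, hg, Matrix.mul_fin_two]
          apply mat2_ext
          · linear_combination (1)*hα + (-1)*hp + (-1)*two0
          · linear_combination (-1)*hq
          · linear_combination (-1)*hr
          · linear_combination (1)*hα + (-1)*hs + (-1)*two0
        · show α + (α + t) = t
          linear_combination (α)*two0
        · show (α + t) + α = t
          linear_combination (α)*two0
      · have hps : p + s ≠ 0 := by
          intro h
          apply hp
          have hsq : (p - 1) * (p - 1) = 0 := by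
            linear_combination (-1)*hdet + (-r)*hq + (-2 + p)*h + (s)*two0
          exact sub_eq_zero.mp (mul_self_eq_zero.mp hsq)
        refine ⟨M2 (t*(1+p)/(p+s)) 1 ((t*(1+p)/(p+s))*(t + t*(1+p)/(p+s)) - 1)
            (t + t*(1+p)/(p+s)) (by ring),
          M2 ((t + t*(1+p)/(p+s))*p) s
            (((t*(1+p)/(p+s))*(t + t*(1+p)/(p+s)) - 1)*p) ((t*(1+p)/(p+s))*s) ?_, ?_, ?_, ?_⟩
        · field_simp
          linear_combination (2*p*s + p^2 + 2*q*r + s^2)*hdet + (p^2*r + 2*q*r^2 + 2*r + r*s^2)*hq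
        · apply Subtype.ext
          simp only [Matrix.SpecialLinearGroup.coe_mul, M2_coe, hg, Matrix.mul_fin_two]
          apply mat2_ext <;> field_simp
          · linear_combination (-4*p + 2*p*t^2 - 2*s + 2*t^2)*hdet + (-4*p*r + 2*p*r*t^2 - 2*r*s + 2*r*t^2)*hq + (-2*p + 2*p*t^2 + 3*p^2*t^2 - p^3 + 2*p^3*t^2 - s + t^2)*two0
          · linear_combination (2*t)*hdet + (-p + 2*r*t - s)*hq + (s*t + t)*two0
          · linear_combination (-(p+s)^3)*hr + (t*p*(p+s+(1+p))*(t^2*(1+p)*(p+s+(1+p)) - (p+s)^2))*two0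
          · linear_combination (-2*p + 4*p*t^2 - 4*s + 2*s*t^2 + 6*t^2)*hdet + (-2*p*r + 4*p*r*t^2 - 4*r*s + 2*r*s*t^2 + 6*r*t^2)*hq + (-p + 2*p*t^2 - 2*s + 2*s*t^2 + s^2*t^2 - s^3 + 3*t^2)*two0
        · show t*(1+p)/(p+s) + (t + t*(1+p)/(p+s)) = t
          field_simp
          linear_combination (1 + p)*two0
        · show (t + t*(1+p)/(p+s))*p + (t*(1+p)/(p+s))*s = t
          field_simp
          linear_combination (2*t)*hdet + (2*t*r)*hq + (p*s + p^2 + t - t*p*s)*two0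
    · refine ⟨M2 α ((t + t*p + α*p + α*s)/r) 0 (α+t) (by linear_combination hα - two0),
        M2 ((α+t)*p + ((t + t*p + α*p + α*s)/r)*r) (((t + t*p + α*p + α*s)/r)*s)
          (α*r) (α*s) ?_, ?_, ?_, ?_⟩
      · field_simp
        linear_combination (p*s)*hα + (-1)*hdet + (-r)*hq + (-1)*two0
      · apply Subtype.ext
        simp only [Matrix.SpecialLinearGroup.coe_mul, M2_coe, hg, Matrix.mul_fin_two]
        apply mat2_ext <;> field_simp
        · linear_combination (2*s + 3*p)*hα + (-s - 2*p + α*t - α*t*s)*two0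
        · linear_combination (2*p*s + 2*s^2)*hα + (-2)*hdet + (-3*r)*hq + (-1 + s*t*α - s^2 - s^2*t*α)*two0
        · linear_combination (r)*hα + (-r)*two0
        · linear_combination (r*s)*hα + (-r*s)*two0
      · show α + (α + t) = t
        linear_combination (α)*two0
      · show ((α+t)*p + ((t + t*p + α*p + α*s)/r)*r) + α*s = t
        field_simp
        linear_combination (p*t + p*α + s*α)*two0
  · refine ⟨M2 α 0 ((t + t*p + α*p + α*s)/q) (α+t) (by linear_combination hα - two0),
      M2 ((α+t)*p) ((α+t)*q) (((t + t*p + α*p + α*s)/q)*p + α*r)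
        (((t + t*p + α*p + α*s)/q)*q + α*s) ?_, ?_, ?_, ?_⟩
    · field_simp
      linear_combination (-q*r + p*s)*hα + (-1)*hdet + (-1)*two0
    · apply Subtype.ext
      simp only [Matrix.SpecialLinearGroup.coe_mul, M2_coe, hg, Matrix.mul_fin_two]
      apply mat2_ext <;> field_simp
      · linear_combination (p*q)*hα + (-p*q)*two0
      · linear_combination (q)*hα + (-q)*two0
      · linear_combination (2*p*s + 2*p^2 + q*r)*hα + (-2)*hdet + (-1 + p*t*α + p*t^2 - p^2 + p^2*t*α + p^2*t^2 - 2*q*r)*two0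
      · linear_combination (3*s + 2*p)*hα + (-2*s - p + t^2 + t^2*p + α*t + α*t*p)*two0
    · show α + (α + t) = t
      linear_combination (α)*two0
    · show (α+t)*p + (((t + t*p + α*p + α*s)/q)*q + α*s) = t
      field_simp
      linear_combination (p*t + p*α + s*α)*two0

end PSL2Aux

namespace PSL2Aux

variable {F : Type*} [Field F] [CharP F 2]

lemma center_triv [Fintype F] [DecidableEq F] (Z : SL(2, F))
    (hZ : Z ∈ Subgroup.center (SL(2, F))) : Z = 1 := by
  have two0 : (2 : F) = 0 := h2
  obtain ⟨w, hw2, hwZ⟩ := Matrix.SpecialLinearGroup.mem_center_iff.mp hZ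
  have hw2' : w ^ 2 = 1 := by simpa using hw2
  have hw1 : w = 1 := by
    have hsq : (w - 1) * (w - 1) = 0 := by
      linear_combination hw2' + (1 - w) * two0
    exact sub_eq_zero.mp (mul_self_eq_zero.mp hsq)
  apply Subtype.ext
  rw [← hwZ, hw1]
  simp

lemma mem_range_of_pow_card [Fintype F] {K : Type*} [Field K] [Algebra F K] (β : K)
    (h : β ^ (Fintype.card F) = β) : ∃ a : F, algebraMap F K a = β := by
  by_contra hc
  push_neg at hc
  have hq1 : 1 < Fintype.card F := Fintype.one_lt_card
  set P : Polynomial K := Polynomial.X ^ (Fintype.card F) - Polynomial.X with hP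
  have hPdeg : P.natDegree = Fintype.card F := FiniteField.X_pow_card_sub_X_natDegree_eq K hq1
  have hP0 : P ≠ 0 := fun h0 => by
    rw [h0, Polynomial.natDegree_zero] at hPdeg; omega
  have hroot : ∀ a : F, algebraMap F K a ∈ P.roots := by
    intro a
    rw [Polynomial.mem_roots hP0]
    simp only [Polynomial.IsRoot, hP, Polynomial.eval_sub, Polynomial.eval_pow,
      Polynomial.eval_X]
    rw [← map_pow, FiniteField.pow_card, sub_self]
  have hβ : β ∈ P.roots := by
    rw [Polynomial.mem_roots hP0]
    simp only [Polynomial.IsRoot, hP, Polynomial.eval_sub, Polynomial.eval_pow,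
      Polynomial.eval_X]
    rw [h, sub_self]
  classical
  set T : Finset K := insert β (Finset.univ.image (algebraMap F K)) with hT
  have hTcard : T.card = Fintype.card F + 1 := by
    rw [hT, Finset.card_insert_of_notMem (by simp [hc]),
      Finset.card_image_of_injective _ (algebraMap F K).injective, Finset.card_univ]
  have hsub : T ⊆ P.roots.toFinset := by
    intro z hz
    rw [Multiset.mem_toFinset]
    rw [hT, Finset.mem_insert] at hz
    rcases hz with rfl | hz
    · exact hβ
    · obtain ⟨a, _, rfl⟩ := Finset.mem_image.mp hz
      exact hroot a
  have h1 := Finset.card_le_card hsub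
  have h2' := Multiset.toFinset_card_le P.roots
  have h3 := Polynomial.card_roots' P
  omega

lemma exists_root [Fintype F] [DecidableEq F] (X : SL(2, F))
    (hXq : X ^ (Fintype.card F - 1) = 1) :
    ∃ α : F,
      α * α + ((X : Matrix (Fin 2) (Fin 2) F) 0 0 + (X : Matrix (Fin 2) (Fin 2) F) 1 1) * α
        + 1 = 0 := by
  have two0 : (2 : F) = 0 := h2
  set t := (X : Matrix (Fin 2) (Fin 2) F) 0 0 + (X : Matrix (Fin 2) (Fin 2) F) 1 1 with htdef
  set K := AlgebraicClosure F
  have two0K : (2 : K) = 0 := by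
    rw [← map_ofNat (algebraMap F K) 2, two0, map_zero]
  set t' : K := algebraMap F K t with ht'
  obtain ⟨β, hβroot⟩ := IsAlgClosed.exists_root
    (Polynomial.C 1 * Polynomial.X ^ 2 + Polynomial.C t' * Polynomial.X + Polynomial.C 1)
    (by rw [Polynomial.degree_quadratic one_ne_zero]; exact two_ne_zero)
  have hβ : β * β + t' * β + 1 = 0 := by
    have h := hβroot
    simp only [Polynomial.IsRoot, Polynomial.eval_add, Polynomial.eval_mul,
      Polynomial.eval_pow, Polynomial.eval_X, Polynomial.eval_C, one_mul] at h
    linear_combination h + (β * β - β ^ 2)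
  set M : Matrix (Fin 2) (Fin 2) K := (X : Matrix (Fin 2) (Fin 2) F).map (algebraMap F K)
    with hM
  set a' := algebraMap F K ((X : Matrix (Fin 2) (Fin 2) F) 0 0) with ha'
  set b' := algebraMap F K ((X : Matrix (Fin 2) (Fin 2) F) 0 1) with hb'
  set c' := algebraMap F K ((X : Matrix (Fin 2) (Fin 2) F) 1 0) with hc'
  set d' := algebraMap F K ((X : Matrix (Fin 2) (Fin 2) F) 1 1) with hd'
  have hdetX : (X : Matrix (Fin 2) (Fin 2) F) 0 0 * (X : Matrix (Fin 2) (Fin 2) F) 1 1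
      - (X : Matrix (Fin 2) (Fin 2) F) 0 1 * (X : Matrix (Fin 2) (Fin 2) F) 1 0 = 1 := by
    have h := X.2
    rw [Matrix.det_fin_two] at h
    exact h
  have h00 : a' * d' - b' * c' = 1 := by
    rw [ha', hb', hc', hd', ← _root_.map_mul, ← _root_.map_mul, ← _root_.map_sub, hdetX, _root_.map_one]
  have htt : a' + d' = t' := by
    rw [ha', hd', ht', htdef, _root_.map_add]
  have hdetN : (M + β • (1 : Matrix (Fin 2) (Fin 2) K)).det = 0 := by
    rw [Matrix.det_fin_two]
    simp only [Matrix.add_apply, Matrix.smul_apply, Matrix.one_apply, hM, Matrix.map_apply,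
      smul_eq_mul, ← ha', ← hb', ← hc', ← hd']
    norm_num
    linear_combination h00 + β * htt + hβ
  obtain ⟨v, hv0, hNv⟩ := Matrix.exists_mulVec_eq_zero_iff.mpr hdetN
  have hMv : M.mulVec v = β • v := by
    have h1 : M.mulVec v + β • v = 0 := by
      calc M.mulVec v + β • v = (M + β • 1).mulVec v := by
            rw [Matrix.add_mulVec, Matrix.smul_mulVec, Matrix.one_mulVec]
        _ = 0 := hNv
    have h3 := eq_neg_of_add_eq_zero_left h1
    rw [h3]
    funext i
    simp only [Pi.neg_apply, Pi.smul_apply, smul_eq_mul]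
    linear_combination (-(β * v i)) * two0K
  have hpow : ∀ n : ℕ, (M ^ n).mulVec v = β ^ n • v := by
    intro n
    induction n with
    | zero => simp [Matrix.one_mulVec]
    | succ n ih =>
        rw [pow_succ, ← Matrix.mulVec_mulVec, hMv, Matrix.mulVec_smul, ih, smul_smul,
          pow_succ, mul_comm]
  have hM1 : M ^ (Fintype.card F - 1) = 1 := by
    have hcoe : ((X : Matrix (Fin 2) (Fin 2) F) ^ (Fintype.card F - 1)) = 1 := by
      have h := congrArg (fun Y : SL(2, F) => (Y : Matrix (Fin 2) (Fin 2) F)) hXq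
      simpa using h
    calc M ^ (Fintype.card F - 1)
        = (algebraMap F K).mapMatrix ((X : Matrix (Fin 2) (Fin 2) F) ^ (Fintype.card F - 1)) := by
          rw [_root_.map_pow, RingHom.mapMatrix_apply, hM]
      _ = 1 := by rw [hcoe, _root_.map_one]
  obtain ⟨i, hvi⟩ := Function.ne_iff.mp hv0
  have hβq1 : β ^ (Fintype.card F - 1) = 1 := by
    have h1 := hpow (Fintype.card F - 1)
    rw [hM1, Matrix.one_mulVec] at h1
    have h5 := congrFun h1 i
    simp only [Pi.smul_apply, smul_eq_mul] at h5
    have h4 : β ^ (Fintype.card F - 1) * v i = 1 * v i := by rw [one_mul]; exact h5.symm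
    exact mul_right_cancel₀ hvi h4
  have hβq : β ^ (Fintype.card F) = β := by
    have hpos : 0 < Fintype.card F := Fintype.card_pos
    calc β ^ Fintype.card F = β ^ (Fintype.card F - 1 + 1) := by rw [Nat.sub_add_cancel hpos]
      _ = β ^ (Fintype.card F - 1) * β := pow_succ _ _
      _ = β := by rw [hβq1, one_mul]
  obtain ⟨a, ha⟩ := mem_range_of_pow_card β hβq
  refine ⟨a, ?_⟩
  apply (algebraMap F K).injective
  rw [_root_.map_zero, _root_.map_add, _root_.map_add, _root_.map_mul, _root_.map_mul, _root_.map_one, ha, ← ht']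
  exact hβ

end PSL2Aux

namespace PSL2Aux

variable {F : Type*} [Field F] [CharP F 2]

lemma sq_eq_one_of_trace_zero (X : SL(2, F))
    (h : (X : Matrix (Fin 2) (Fin 2) F) 0 0 + (X : Matrix (Fin 2) (Fin 2) F) 1 1 = 0) :
    X * X = 1 := by
  have two0 : (2 : F) = 0 := h2
  set a := (X : Matrix (Fin 2) (Fin 2) F) 0 0
  set b := (X : Matrix (Fin 2) (Fin 2) F) 0 1
  set c := (X : Matrix (Fin 2) (Fin 2) F) 1 0
  set d := (X : Matrix (Fin 2) (Fin 2) F) 1 1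
  have hX : (X : Matrix (Fin 2) (Fin 2) F) = !![a, b; c, d] := by
    rw [Matrix.eta_fin_two (X : Matrix (Fin 2) (Fin 2) F)]
  have hdet : a * d - b * c = 1 := by
    have h' := X.2
    rw [Matrix.det_fin_two] at h'
    exact h'
  apply Subtype.ext
  rw [Matrix.SpecialLinearGroup.coe_mul, Matrix.SpecialLinearGroup.coe_one, hX,
    Matrix.mul_fin_two, Matrix.one_fin_two]
  apply mat2_ext
  · linear_combination a * h - hdet - two0
  · linear_combination b * h
  · linear_combination c * h
  · linear_combination d * h - hdet - two0

end PSL2Aux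

open PSL2Aux

/-- For `G = PSL₂(q)`, `q > 2` even: if `x` is a nontrivial semisimple element whose
order divides `q - 1`, then `C² = G` where `C` is the conjugacy class of `x`. -/
theorem psl2_even_split_semisimple_sq_eq_univ
    {F : Type*} [Field F] [Fintype F] [DecidableEq F] [CharP F 2]
    (hq : 2 < Fintype.card F)
    (x : PSL(2, F)) (hx1 : x ≠ 1) (hx2 : orderOf x ≠ 2)
    (hdvd : orderOf x ∣ Fintype.card F - 1)
    (C : Set PSL(2, F)) (hC : C = {h | IsConj x h}) :
    C * C = Set.univ := by
  subst hC
  obtain ⟨X, rfl⟩ := QuotientGroup.mk'_surjective (Subgroup.center (SL(2, F))) x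
  set π := QuotientGroup.mk' (Subgroup.center (SL(2, F))) with hπ
  have hXq : X ^ (Fintype.card F - 1) = 1 := by
    have h1 : (π X) ^ (Fintype.card F - 1) = 1 := orderOf_dvd_iff_pow_eq_one.mp hdvd
    have h2 : π (X ^ (Fintype.card F - 1)) = 1 := by rw [map_pow]; exact h1
    have h3 : X ^ (Fintype.card F - 1) ∈ Subgroup.center (SL(2, F)) :=
      (QuotientGroup.eq_one_iff _).mp h2
    exact center_triv _ h3
  have ht : (X : Matrix (Fin 2) (Fin 2) F) 0 0 + (X : Matrix (Fin 2) (Fin 2) F) 1 1 ≠ 0 := by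
    intro h0
    have hsq : X * X = 1 := sq_eq_one_of_trace_zero X h0
    have hx2' : (π X) * (π X) = 1 := by rw [← _root_.map_mul, hsq, _root_.map_one]
    have hdvd2 : orderOf (π X) ∣ 2 :=
      orderOf_dvd_iff_pow_eq_one.mpr (by rw [pow_two]; exact hx2')
    rcases Nat.Prime.eq_one_or_self_of_dvd Nat.prime_two _ hdvd2 with h | h
    · exact hx1 (orderOf_eq_one_iff.mp h)
    · exact hx2 h
  obtain ⟨α, hα⟩ := exists_root X hXq
  rw [Set.eq_univ_iff_forall]
  intro g
  obtain ⟨G, rfl⟩ := QuotientGroup.mk'_surjective (Subgroup.center (SL(2, F))) g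
  obtain ⟨A, B, hAB, hTA, hTB⟩ := exists_factorization _ α ht hα G
  have hXA : IsConj X A :=
    (isConj_D _ α ht hα X rfl).symm.trans (isConj_D _ α ht hα A hTA)
  have hXB : IsConj X B :=
    (isConj_D _ α ht hα X rfl).symm.trans (isConj_D _ α ht hα B hTB)
  have hG : π G = π A * π B := by rw [← _root_.map_mul, hAB]
  rw [hG]
  exact Set.mul_mem_mul (π.map_isConj hXA) (π.map_isConj hXB)
end

section
/- Let G = PSL₂(q) with q > 3 odd, and let C be the G-conjugacy class of a semisimple element x of order greater than 2. Then C² = G. -/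
open Matrix
open scoped MatrixGroups Pointwise

namespace PSL2Aux

open Polynomial

variable {F : Type*} [Field F]

/-- Cayley–Hamilton for 2×2 matrices. -/
lemma ch2 (A : Matrix (Fin 2) (Fin 2) F) : A * A = (A.trace) • A - (A.det) • 1 := by
  ext i j
  fin_cases i <;> fin_cases j <;>
    simp [Matrix.mul_apply, Fin.sum_univ_succ, Matrix.trace_fin_two, Matrix.det_fin_two,
      Matrix.one_apply] <;> ring

lemma det_smul_one_sub (A : Matrix (Fin 2) (Fin 2) F) (t : F) :
    (t • (1 : Matrix (Fin 2) (Fin 2) F) - A).det = t * t - t * A.trace + A.det := by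
  simp [Matrix.det_fin_two, Matrix.trace_fin_two, Matrix.one_apply]
  ring

/-- Existence of solutions to `y² = α d² + β d + γ` over an odd finite field. -/
lemma quad_sol [Fintype F] (hodd : Fintype.card F % 2 = 1)
    (α β γ : F) (h : α ≠ 0 ∨ β ≠ 0) : ∃ d y : F, y * y = α * (d * d) + β * d + γ := by
  by_cases hα : α = 0
  · subst hα
    have hβ : β ≠ 0 := h.resolve_left (by simp)
    refine ⟨-γ / β, 0, ?_⟩
    field_simp
    ring
  · obtain ⟨a, b, hab⟩ := FiniteField.exists_root_sum_quadratic
      (f := C α * X ^ 2 + C β * X + C γ) (g := -(X ^ 2))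
      (degree_quadratic hα) ((degree_neg _).trans (degree_X_pow 2)) hodd
    simp only [eval_add, eval_mul, eval_pow, eval_C, eval_X, eval_neg] at hab
    exact ⟨a, b, by linear_combination -hab⟩

lemma comp_id (A : Matrix (Fin 2) (Fin 2) F) (v0 v1 : F) :
    A * !![v0, A 0 0 * v0 + A 0 1 * v1; v1, A 1 0 * v0 + A 1 1 * v1] =
      !![v0, A 0 0 * v0 + A 0 1 * v1; v1, A 1 0 * v0 + A 1 1 * v1] * !![0, -A.det; 1, A.trace] := by
  ext i j
  fin_cases i <;> fin_cases j <;>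
    simp [Matrix.mul_apply, Fin.sum_univ_succ, Matrix.trace_fin_two, Matrix.det_fin_two] <;> ring

/-- Any non-scalar 2×2 matrix is `GL`-conjugate to its companion matrix. -/
lemma companion (A : Matrix (Fin 2) (Fin 2) F)
    (h : A 1 0 ≠ 0 ∨ A 0 1 ≠ 0 ∨ A 0 0 ≠ A 1 1) :
    ∃ P : Matrix (Fin 2) (Fin 2) F, P.det ≠ 0 ∧ A * P = P * !![0, -A.det; 1, A.trace] := by
  by_cases hc : A 1 0 = 0
  · by_cases hb : A 0 1 = 0
    · have had : A 0 0 ≠ A 1 1 := by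
        rcases h with h | h | h
        · exact absurd hc h
        · exact absurd hb h
        · exact h
      refine ⟨_, ?_, comp_id A 1 1⟩
      simp [Matrix.det_fin_two_of, hb, hc]
      intro hEq
      exact had (sub_eq_zero.mp hEq).symm
    · refine ⟨_, ?_, comp_id A 0 1⟩
      simp [Matrix.det_fin_two_of, hc]
      exact hb
  · refine ⟨_, ?_, comp_id A 1 0⟩
    simp [Matrix.det_fin_two_of, hc]

lemma scalar_case (A : Matrix (Fin 2) (Fin 2) F) (hdet : A.det = 1)
    (h : ¬(A 1 0 ≠ 0 ∨ A 0 1 ≠ 0 ∨ A 0 0 ≠ A 1 1)) : A = 1 ∨ A = -1 := by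
  push_neg at h
  obtain ⟨hc, hb, had⟩ := h
  rw [Matrix.det_fin_two, hb, hc, ← had] at hdet
  have h1 : A 0 0 = 1 ∨ A 0 0 = -1 := by
    rcases mul_self_eq_one_iff.mp (by linear_combination hdet) with h | h
    · exact Or.inl h
    · exact Or.inr h
  rcases h1 with h1 | h1
  · left
    ext i j
    fin_cases i <;> fin_cases j <;>
      simp [Matrix.one_apply, hb, hc, h1, ← had]
  · right
    ext i j
    fin_cases i <;> fin_cases j <;>
      simp [Matrix.one_apply, hb, hc, h1, ← had]

lemma comm_inv (Z W : Matrix (Fin 2) (Fin 2) F) (h : IsUnit Z.det) (hc : Z * W = W * Z) :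
    W * Z⁻¹ = Z⁻¹ * W := by
  calc W * Z⁻¹ = Z⁻¹ * Z * (W * Z⁻¹) := by rw [Matrix.nonsing_inv_mul _ h, one_mul]
    _ = Z⁻¹ * (Z * W) * Z⁻¹ := by simp only [Matrix.mul_assoc]
    _ = Z⁻¹ * (W * Z) * Z⁻¹ := by rw [hc]
    _ = Z⁻¹ * W * (Z * Z⁻¹) := by simp only [Matrix.mul_assoc]
    _ = Z⁻¹ * W := by rw [Matrix.mul_nonsing_inv _ h, mul_one]

/-- Any 2×2 matrix of determinant 1 and trace `t` with `t² ≠ 4` is `SL₂`-conjugate to the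
companion matrix of `X² - tX + 1`. -/
lemma conj_to_companion [Fintype F] (hodd : Fintype.card F % 2 = 1) (h2 : (2:F) ≠ 0)
    (A : Matrix (Fin 2) (Fin 2) F) (t : F) (hdet : A.det = 1) (htr : A.trace = t)
    (h4 : t * t ≠ 4) :
    ∃ S : Matrix (Fin 2) (Fin 2) F, S.det = 1 ∧ A * S = S * !![0, -1; 1, t] := by
  have hns : A 1 0 ≠ 0 ∨ A 0 1 ≠ 0 ∨ A 0 0 ≠ A 1 1 := by
    by_contra hcon
    rcases scalar_case A hdet hcon with rfl | rfl
    · apply h4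
      rw [← htr]
      simp [Matrix.trace_fin_two, Matrix.one_apply]
      norm_num
    · apply h4
      rw [← htr]
      simp [Matrix.trace_fin_two, Matrix.one_apply]
      norm_num
  obtain ⟨P, hPdet, hAP⟩ := companion A hns
  rw [hdet, htr] at hAP
  obtain ⟨b, u, hu⟩ := quad_sol hodd (t*t-4) 0 (4 * P.det) (Or.inl (sub_ne_zero.mpr h4))
  set a : F := (u - t * b) / 2 with ha
  set Z : Matrix (Fin 2) (Fin 2) F := !![a, -b; b, a + b * t] with hZ
  have hZdet : Z.det = P.det := by
    rw [hZ, Matrix.det_fin_two_of, ha]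
    field_simp
    linear_combination hu
  have hZdet0 : IsUnit Z.det := by rw [hZdet]; exact isUnit_iff_ne_zero.mpr hPdet
  have hcomm : Z * !![0,-1;1,t] = !![0,-1;1,t] * Z := by
    rw [hZ]
    ext i j
    fin_cases i <;> fin_cases j <;> simp [Matrix.mul_apply, Fin.sum_univ_succ] <;> ring
  refine ⟨P * Z⁻¹, ?_, ?_⟩
  · rw [Matrix.det_mul, Matrix.det_nonsing_inv, hZdet]
    exact Ring.mul_inverse_cancel _ (isUnit_iff_ne_zero.mpr hPdet)
  · calc A * (P * Z⁻¹) = (A * P) * Z⁻¹ := by rw [Matrix.mul_assoc]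
      _ = P * (!![0,-1;1,t] * Z⁻¹) := by rw [hAP, Matrix.mul_assoc]
      _ = P * (Z⁻¹ * !![0,-1;1,t]) := by rw [comm_inv Z _ hZdet0 hcomm]
      _ = P * Z⁻¹ * !![0,-1;1,t] := by rw [Matrix.mul_assoc]

lemma solve_core (h2 : (2:F) ≠ 0) (t τ s d w : F)
    (hw : w * w = (τ*τ-4) * (d*d) + (4*t-2*s*τ) * d + (s*s-4)) :
    ∃ A : Matrix (Fin 2) (Fin 2) F,
      A.det = 1 ∧ A.trace = t ∧ (A * !![0,-1;1,τ]).trace = s := by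
  set b : F := (w + s - d * τ) / 2 with hb
  refine ⟨!![t - d, b; b - s + d * τ, d], ?_, ?_, ?_⟩
  · rw [Matrix.det_fin_two_of, hb]
    field_simp
    linear_combination -hw
  · simp [Matrix.trace_fin_two]
  · simp [Matrix.trace_fin_two, Matrix.mul_apply, Fin.sum_univ_succ]

lemma solve_at_companion [Fintype F] (hodd : Fintype.card F % 2 = 1) (h2 : (2:F) ≠ 0)
    (t τ : F) (ht : t ≠ 0) :
    ∃ ε : F, (ε = 1 ∨ ε = -1) ∧ ∃ A : Matrix (Fin 2) (Fin 2) F,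
      A.det = 1 ∧ A.trace = t ∧ (A * !![0,-1;1,τ]).trace = t * (τ - ε) := by
  have h8 : (-8 : F) * t ≠ 0 := by
    refine mul_ne_zero ?_ ht
    intro h
    apply h2
    have h' : (-8 : F) = -(2*2*2) := by norm_num
    rw [h', neg_eq_zero] at h
    rcases mul_eq_zero.mp h with h' | h'
    · rcases mul_eq_zero.mp h' with h'' | h'' <;> exact h''
    · exact h'
  by_cases hτ : τ * τ - 4 = 0
  · have hfac : (τ - 2) * (τ + 2) = 0 := by linear_combination hτ
    rcases mul_eq_zero.mp hfac with h' | h'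
    · have hτ2 : τ = 2 := by linear_combination h'
      subst hτ2
      refine ⟨-1, Or.inr rfl, ?_⟩
      obtain ⟨d, w, hw⟩ := quad_sol hodd (2*2-4) (4*t - 2*(t*(2-(-1)))*2)
        ((t*(2-(-1)))*(t*(2-(-1)))-4) (Or.inr (fun hh => h8 (by linear_combination hh)))
      exact solve_core h2 t 2 (t*(2-(-1))) d w (by linear_combination hw)
    · have hτ2 : τ = -2 := by linear_combination h'
      subst hτ2
      refine ⟨1, Or.inl rfl, ?_⟩
      obtain ⟨d, w, hw⟩ := quad_sol hodd ((-2)*(-2)-4) (4*t - 2*(t*((-2)-1))*(-2))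
        ((t*((-2)-1))*(t*((-2)-1))-4) (Or.inr (fun hh => h8 (by linear_combination hh)))
      exact solve_core h2 t (-2) (t*((-2)-1)) d w (by linear_combination hw)
  · refine ⟨1, Or.inl rfl, ?_⟩
    obtain ⟨d, w, hw⟩ := quad_sol hodd (τ*τ-4) (4*t - 2*(t*(τ-1))*τ) ((t*(τ-1))*(t*(τ-1))-4)
      (Or.inl hτ)
    exact solve_core h2 t τ (t*(τ-1)) d w (by linear_combination hw)

/-- Every determinant-one 2×2 matrix is the product of two determinant-one matrices with
traces `t` and `±t`. -/
lemma sl_main [Fintype F] (hodd : Fintype.card F % 2 = 1) (h2 : (2:F) ≠ 0)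
    (t : F) (ht : t ≠ 0) (h4 : t * t ≠ 4) (M : Matrix (Fin 2) (Fin 2) F) (hdetM : M.det = 1) :
    ∃ A B : Matrix (Fin 2) (Fin 2) F,
      A.det = 1 ∧ B.det = 1 ∧ A.trace = t ∧ (B.trace = t ∨ B.trace = -t) ∧ A * B = M := by
  by_cases hns : M 1 0 ≠ 0 ∨ M 0 1 ≠ 0 ∨ M 0 0 ≠ M 1 1
  · obtain ⟨P, hPdet, hMP⟩ := companion M hns
    rw [hdetM] at hMP
    set τ : F := M.trace with htau
    have hPu : IsUnit P.det := isUnit_iff_ne_zero.mpr hPdet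
    have hM : M = P * !![0, -1; 1, τ] * P⁻¹ := by
      rw [← hMP, Matrix.mul_assoc, Matrix.mul_nonsing_inv _ hPu, mul_one]
    obtain ⟨ε, hε, A', hdA', htA', hcA'⟩ := solve_at_companion hodd h2 t τ ht
    set A : Matrix (Fin 2) (Fin 2) F := P * A' * P⁻¹ with hA
    have hdetA : A.det = 1 := by
      rw [hA, Matrix.det_mul, Matrix.det_mul, hdA', Matrix.det_nonsing_inv, mul_one]
      exact Ring.mul_inverse_cancel _ hPu
    have htrA : A.trace = t := by
      rw [hA, Matrix.trace_mul_comm (P * A') P⁻¹, ← Matrix.mul_assoc,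
        Matrix.nonsing_inv_mul _ hPu, one_mul, htA']
    set B : Matrix (Fin 2) (Fin 2) F := (t • (1 : Matrix (Fin 2) (Fin 2) F) - A) * M with hB
    have hAB : A * B = M := by
      have h1 : A * (t • (1 : Matrix (Fin 2) (Fin 2) F) - A) = 1 := by
        rw [Matrix.mul_sub, Matrix.mul_smul, mul_one, ch2 A, htrA, hdetA, one_smul]
        abel
      rw [hB, ← Matrix.mul_assoc, h1, one_mul]
    have hdetB : B.det = 1 := by
      rw [hB, Matrix.det_mul, det_smul_one_sub, htrA, hdetM, hdetA, mul_one]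
      ring
    have htrAM : (A * M).trace = t * (τ - ε) := by
      have hh : A * M = P * (A' * !![0, -1; 1, τ]) * P⁻¹ := by
        conv_lhs => rw [hA, hM]
        simp only [Matrix.mul_assoc]
        rw [Matrix.nonsing_inv_mul_cancel_left _ _ hPu]
      rw [hh, Matrix.trace_mul_comm (P * (A' * !![0, -1; 1, τ])) P⁻¹, ← Matrix.mul_assoc,
        Matrix.nonsing_inv_mul _ hPu, one_mul, hcA']
    have htrB : B.trace = t * ε := by
      rw [hB, Matrix.sub_mul, Matrix.trace_sub, Matrix.smul_mul, one_mul, Matrix.trace_smul,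
        htrAM, smul_eq_mul, ← htau]
      ring
    refine ⟨A, B, hdetA, hdetB, htrA, ?_, hAB⟩
    rcases hε with rfl | rfl
    · left; rw [htrB, mul_one]
    · right; rw [htrB]; ring
  · rcases scalar_case M hdetM hns with rfl | rfl
    · refine ⟨!![0, -1; 1, t], !![t, 1; -1, 0], ?_, ?_, ?_, Or.inl ?_, ?_⟩ <;>
        simp [Matrix.det_fin_two_of, Matrix.trace_fin_two] <;>
        · ext i j
          fin_cases i <;> fin_cases j <;>
            simp [Matrix.mul_apply, Fin.sum_univ_succ, Matrix.one_apply]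
    · refine ⟨!![0, -1; 1, t], !![-t, -1; 1, 0], ?_, ?_, ?_, Or.inr ?_, ?_⟩ <;>
        simp [Matrix.det_fin_two_of, Matrix.trace_fin_two] <;>
        · ext i j
          fin_cases i <;> fin_cases j <;>
            simp [Matrix.mul_apply, Fin.sum_univ_succ, Matrix.one_apply]

/-- Two elements of `SL₂(F)` with the same trace `t`, `t² ≠ 4`, are conjugate in `SL₂(F)`. -/
lemma sl_conj [Fintype F] (hodd : Fintype.card F % 2 = 1) (h2 : (2:F) ≠ 0)
    (A B : SL(2, F)) (t : F) (h4 : t * t ≠ 4)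
    (hA : Matrix.trace (A : Matrix (Fin 2) (Fin 2) F) = t)
    (hB : Matrix.trace (B : Matrix (Fin 2) (Fin 2) F) = t) : IsConj A B := by
  obtain ⟨S₁, hd₁, hc₁⟩ := conj_to_companion hodd h2 (A : Matrix (Fin 2) (Fin 2) F) t A.2 hA h4
  obtain ⟨S₂, hd₂, hc₂⟩ := conj_to_companion hodd h2 (B : Matrix (Fin 2) (Fin 2) F) t B.2 hB h4
  have hu₁ : IsUnit S₁.det := by rw [hd₁]; exact isUnit_one
  have hS : (S₂ * S₁⁻¹) * (A : Matrix (Fin 2) (Fin 2) F)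
      = (B : Matrix (Fin 2) (Fin 2) F) * (S₂ * S₁⁻¹) := by
    have h1 : S₁⁻¹ * (A : Matrix (Fin 2) (Fin 2) F) = !![0,-1;1,t] * S₁⁻¹ := by
      calc S₁⁻¹ * (A : Matrix (Fin 2) (Fin 2) F)
          = S₁⁻¹ * ((A : Matrix (Fin 2) (Fin 2) F) * S₁) * S₁⁻¹ := by
            rw [Matrix.mul_assoc, Matrix.mul_assoc, Matrix.mul_nonsing_inv _ hu₁, mul_one]
        _ = S₁⁻¹ * (S₁ * !![0,-1;1,t]) * S₁⁻¹ := by rw [hc₁]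
        _ = !![0,-1;1,t] * S₁⁻¹ := by
            rw [← Matrix.mul_assoc, Matrix.nonsing_inv_mul _ hu₁, one_mul]
    calc (S₂ * S₁⁻¹) * (A : Matrix (Fin 2) (Fin 2) F)
        = S₂ * (S₁⁻¹ * (A : Matrix (Fin 2) (Fin 2) F)) := by rw [Matrix.mul_assoc]
      _ = (S₂ * !![0,-1;1,t]) * S₁⁻¹ := by rw [h1, Matrix.mul_assoc]
      _ = ((B : Matrix (Fin 2) (Fin 2) F) * S₂) * S₁⁻¹ := by rw [hc₂]
      _ = (B : Matrix (Fin 2) (Fin 2) F) * (S₂ * S₁⁻¹) := by rw [Matrix.mul_assoc]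
  have hdS : (S₂ * S₁⁻¹).det = 1 := by
    rw [Matrix.det_mul, Matrix.det_nonsing_inv, hd₁, hd₂]
    simp
  set Sg : SL(2,F) := ⟨S₂ * S₁⁻¹, hdS⟩ with hSg
  have hmul : Sg * A = B * Sg := by
    apply Subtype.ext
    rw [Matrix.SpecialLinearGroup.coe_mul, Matrix.SpecialLinearGroup.coe_mul]
    exact hS
  refine isConj_iff.mpr ⟨Sg, ?_⟩
  rw [hmul, mul_assoc, mul_inv_cancel, mul_one]

/-- An element of `SL₂(F)` with trace 2 has `p`-th power equal to one in characteristic `p`. -/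
lemma trace_two_pow_eq_one (p : ℕ) [Fact p.Prime] [CharP F p]
    (u : SL(2, F)) (htr : Matrix.trace (u : Matrix (Fin 2) (Fin 2) F) = 2) : u ^ p = 1 := by
  set m : Matrix (Fin 2) (Fin 2) F := (u : Matrix (Fin 2) (Fin 2) F) with hm
  set N : Matrix (Fin 2) (Fin 2) F := m - 1 with hN
  have hsq : N * N = 0 := by
    have h := ch2 m
    rw [htr, u.2] at h
    have hexp : N * N = m * m - (m + m) + 1 := by rw [hN]; noncomm_ring
    rw [hexp, h, two_smul, one_smul]
    abel
  have hNp : N ^ p = 0 := by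
    have h2le : 2 ≤ p := (Fact.out : p.Prime).two_le
    calc N ^ p = N ^ (p - 2) * N ^ 2 := by rw [← pow_add, Nat.sub_add_cancel h2le]
      _ = N ^ (p - 2) * (N * N) := by rw [pow_two]
      _ = 0 := by rw [hsq, mul_zero]
  have hmp : m ^ p = 1 := by
    have h1 : m = 1 + N := by rw [hN]; abel
    rw [h1, add_pow_char_of_commute _ (Commute.one_left N), one_pow, hNp, add_zero]
  apply Subtype.ext
  rw [Matrix.SpecialLinearGroup.coe_pow, Matrix.SpecialLinearGroup.coe_one]
  exact hmp

end PSL2Aux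

/-- For `G = PSL₂(q)`, `q > 3` odd: if `x` is a semisimple element of order greater
than 2, then `C² = G` where `C` is the conjugacy class of `x`. -/
theorem psl2_odd_semisimple_sq_eq_univ
    {F : Type*} [Field F] [Fintype F] [DecidableEq F] (p : ℕ) [Fact p.Prime] [CharP F p]
    (hp : p ≠ 2) (hq : 3 < Fintype.card F)
    (x : PSL(2, F)) (hx1 : x ≠ 1) (hxp : orderOf x ≠ p) (hx2 : 2 < orderOf x)
    (C : Set PSL(2, F)) (hC : C = {h | IsConj x h}) :
    C * C = Set.univ := by
  have hpF : p.Prime := Fact.out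
  obtain ⟨n, -, hcard⟩ := FiniteField.card F p
  have hodd : Fintype.card F % 2 = 1 := by
    rw [hcard]
    exact Nat.odd_iff.mp ((hpF.odd_of_ne_two hp).pow)
  have h2 : (2:F) ≠ 0 := by
    intro h
    have hdvd : p ∣ 2 := by
      have : ((2 : ℕ) : F) = 0 := by exact_mod_cast h
      exact (CharP.cast_eq_zero_iff F p 2).mp this
    exact hp ((Nat.prime_dvd_prime_iff_eq hpF Nat.prime_two).mp hdvd)
  haveI : Fact (Even (Fintype.card (Fin 2))) := ⟨by simp⟩
  set π := QuotientGroup.mk' (Subgroup.center (SL(2,F))) with hπ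
  obtain ⟨y, hy⟩ := QuotientGroup.mk'_surjective (Subgroup.center (SL(2,F))) x
  set t := Matrix.trace (y : Matrix (Fin 2) (Fin 2) F) with htdef
  have hcenter : (-1 : SL(2,F)) ∈ Subgroup.center (SL(2,F)) :=
    Subgroup.mem_center_iff.mpr (fun g => by rw [mul_neg_one, neg_one_mul])
  have hπneg : π (-1 : SL(2,F)) = 1 := (QuotientGroup.eq_one_iff _).mpr hcenter
  have key : x ^ p ≠ 1 := by
    intro h
    rcases hpF.eq_one_or_self_of_dvd (orderOf x) (orderOf_dvd_of_pow_eq_one h) with h' | h'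
    · exact hx1 (orderOf_eq_one_iff.mp h')
    · exact hxp h'
  have ht2 : t ≠ 2 := by
    intro h
    have h1 := PSL2Aux.trace_two_pow_eq_one p y (by rw [← htdef, h])
    apply key
    rw [← hy, ← map_pow, h1, _root_.map_one]
  have htm2 : t ≠ -2 := by
    intro h
    have hneg : Matrix.trace ((-y : SL(2,F)) : Matrix (Fin 2) (Fin 2) F) = 2 := by
      rw [Matrix.SpecialLinearGroup.coe_neg, Matrix.trace_neg, ← htdef, h, neg_neg]
    have h1 := PSL2Aux.trace_two_pow_eq_one p (-y) hneg
    rw [(hpF.odd_of_ne_two hp).neg_pow] at h1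
    have hyp : y ^ p = -1 := by
      have := congrArg Neg.neg h1
      rwa [neg_neg] at this
    apply key
    rw [← hy, ← map_pow, hyp, hπneg]
  have ht0 : t ≠ 0 := by
    intro h
    have hsq : y * y = -1 := by
      apply Subtype.ext
      rw [Matrix.SpecialLinearGroup.coe_mul, Matrix.SpecialLinearGroup.coe_neg,
        Matrix.SpecialLinearGroup.coe_one, PSL2Aux.ch2, ← htdef, h, y.2, zero_smul, one_smul,
        zero_sub]
    have hxx : x * x = 1 := by rw [← hy, ← _root_.map_mul, hsq, hπneg]
    have hdvd : orderOf x ∣ 2 := orderOf_dvd_of_pow_eq_one (by rw [pow_two]; exact hxx)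
    exact absurd hx2 (not_lt.mpr (Nat.le_of_dvd two_pos hdvd))
  have h4 : t * t ≠ 4 := by
    intro h
    have hfac : (t - 2) * (t + 2) = 0 := by linear_combination h
    rcases mul_eq_zero.mp hfac with h' | h'
    · exact ht2 (by linear_combination h')
    · exact htm2 (by linear_combination h')
  apply Set.eq_univ_of_forall
  intro g
  obtain ⟨gt, hgt⟩ := QuotientGroup.mk'_surjective (Subgroup.center (SL(2,F))) g
  obtain ⟨Am, Bm, hdA, hdB, htA, htB, hABm⟩ :=
    PSL2Aux.sl_main hodd h2 t ht0 h4 (gt : Matrix (Fin 2) (Fin 2) F) gt.2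
  set Ag : SL(2,F) := ⟨Am, hdA⟩ with hAg
  set Bg : SL(2,F) := ⟨Bm, hdB⟩ with hBg
  have hABg : Ag * Bg = gt :=
    Subtype.ext (by rw [Matrix.SpecialLinearGroup.coe_mul]; exact hABm)
  have hgA : π Ag ∈ C := by
    rw [hC]
    exact Set.mem_setOf.mpr
      (hy ▸ (π.map_isConj (PSL2Aux.sl_conj hodd h2 y Ag t h4 htdef.symm htA)))
  have hgB : π Bg ∈ C := by
    rw [hC]
    rcases htB with hB | hB
    · exact Set.mem_setOf.mpr
        (hy ▸ (π.map_isConj (PSL2Aux.sl_conj hodd h2 y Bg t h4 htdef.symm hB)))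
    · have hconj : IsConj (-y) Bg := PSL2Aux.sl_conj hodd h2 (-y) Bg (-t)
        (by rw [neg_mul_neg]; exact h4)
        (by rw [Matrix.SpecialLinearGroup.coe_neg, Matrix.trace_neg, htdef]) hB
      have hπy : π (-y) = x := by
        have hny : (-y : SL(2,F)) = -1 * y := by rw [neg_one_mul]
        rw [hny, _root_.map_mul, hπneg, one_mul, hy]
      exact Set.mem_setOf.mpr (hπy ▸ π.map_isConj hconj)
  have hg : g = π Ag * π Bg := by rw [← _root_.map_mul, hABg, hgt]
  rw [hg]
  exact Set.mul_mem_mul hgA hgB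
end

section
/- Let q = p^e be odd, let C ∈ SL₂(q) with trace γ ≠ ±2, and let t be the order of the image of C in PSL₂(q) (so t ≠ p). Then t is a q-good order if and only if at least one of 2 + γ, 2 − γ is a square in F_q. -/
open Matrix
open scoped MatrixGroups Pointwise


/-- `n` is a `q`-good order: `n` is odd and divides `q - 1` or `q + 1`, or
`n` is even and `4n` divides `q - 1` or `q + 1`. -/
def IsQGood (q n : ℕ) : Prop :=
  1 < n ∧ ((Odd n ∧ (n ∣ q - 1 ∨ n ∣ q + 1)) ∨ (Even n ∧ (4 * n ∣ q - 1 ∨ 4 * n ∣ q + 1)))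

section Aux

lemma qgood_arith (q m N : ℕ) (hq : q % 2 = 1) (hq3 : 3 ≤ q)
    (hNM : N = q - 1 ∨ N = q + 1)
    (hmN : m ∣ N) (hm2 : 2 < m) :
    (IsQGood q (m / Nat.gcd m 2) ↔ (m ∣ N / 2 ∨ ¬ (4 ∣ N))) := by
  have hNeven : N % 2 = 0 := by omega
  have hdvd : ∀ k : ℕ, k ∣ N → (k ∣ q - 1 ∨ k ∣ q + 1) := by
    rintro k hk
    rcases hNM with h1 | h1
    · exact Or.inl (h1 ▸ hk)
    · exact Or.inr (h1 ▸ hk)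
  rcases Nat.even_or_odd m with hme | hmo
  · -- m even
    obtain ⟨u, hu⟩ := hme
    have hgcd : Nat.gcd m 2 = 2 := by
      rcases (Nat.dvd_prime Nat.prime_two).mp (Nat.gcd_dvd_right m 2) with h | h
      · exfalso
        have := Nat.dvd_gcd (⟨u, by omega⟩ : 2 ∣ m) (dvd_refl 2)
        omega
      · exact h
    rw [hgcd]
    have h2N : 2 * m ∣ N ↔ m ∣ N / 2 := by
      obtain ⟨k, hk⟩ : 2 ∣ N := ⟨N / 2, by omega⟩
      rw [hk, Nat.mul_div_cancel_left k (by norm_num : 0 < 2)]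
      exact Nat.mul_dvd_mul_iff_left (by norm_num : 0 < 2)
    by_cases h4 : 4 ∣ m
    · -- t = m/2 even
      obtain ⟨v, hv⟩ := h4
      have ht_even : Even (m / 2) := ⟨v, by omega⟩
      have h4N : (4 : ℕ) ∣ N := dvd_trans ⟨v, hv⟩ hmN
      have hforty : 4 * (m / 2) = 2 * m := by omega
      have hside : (2 * m ∣ q - 1 ∨ 2 * m ∣ q + 1) ↔ 2 * m ∣ N := by
        have h42m : (4 : ℕ) ∣ 2 * m := ⟨2 * v, by omega⟩
        constructor
        · rintro (h | h) <;> rcases hNM with h1 | h1 <;>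
            first
              | (rw [h1]; exact h)
              | (exfalso
                 have d2 := dvd_trans h42m h
                 have d1 : (4 : ℕ) ∣ N := h4N
                 omega)
        · intro h
          rcases hNM with h1 | h1
          · exact Or.inl (h1 ▸ h)
          · exact Or.inr (h1 ▸ h)
      constructor
      · rintro ⟨h1, ⟨ho, _⟩ | ⟨_, h⟩⟩
        · exact absurd ho (by simp [Nat.not_odd_iff_even.mpr ht_even])
        · rw [hforty] at h
          exact Or.inl (h2N.mp (hside.mp h))
      · rintro (h | h)
        · exact ⟨by omega, Or.inr ⟨ht_even, by rw [hforty]; exact hside.mpr (h2N.mpr h)⟩⟩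
        · exact absurd h4N h
    · -- m ≡ 2 mod 4 : t = m/2 odd, both sides true
      have hmod : m % 4 = 2 := by omega
      have ht_odd : Odd (m / 2) := by
        rcases Nat.even_or_odd (m / 2) with ⟨w, hw⟩ | h
        · exact absurd ⟨w, by omega⟩ h4
        · exact h
      have hL : IsQGood q (m / 2) :=
        ⟨by omega, Or.inl ⟨ht_odd, hdvd _ (dvd_trans ⟨2, by omega⟩ hmN)⟩⟩
      have hR : m ∣ N / 2 ∨ ¬ (4 ∣ N) := by
        by_cases h4N : 4 ∣ N
        · left
          rw [← h2N]
          obtain ⟨c, hc⟩ := hmN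
          have hco : c % 2 = 0 := by
            rcases Nat.even_or_odd c with ⟨w, hw⟩ | ⟨w, hw⟩
            · omega
            · exfalso
              have : N = 4 * (u * w) + 2 * u := by rw [hc, hw, hu]; ring
              omega
          obtain ⟨d, hd⟩ : 2 ∣ c := ⟨c / 2, by omega⟩
          exact ⟨d, by rw [hc, hd]; ring⟩
        · exact Or.inr h4N
      exact iff_of_true hL hR
  · -- m odd
    have hgcd : Nat.gcd m 2 = 1 := Nat.Coprime.gcd_eq_one (Nat.coprime_two_right.mpr hmo)
    rw [hgcd, Nat.div_one]
    have hL : IsQGood q m := ⟨by omega, Or.inl ⟨hmo, hdvd _ hmN⟩⟩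
    have hR : m ∣ N / 2 ∨ ¬ (4 ∣ N) := by
      left
      obtain ⟨c, hc⟩ := hmN
      have hco : c % 2 = 0 := by
        rcases Nat.even_or_odd c with ⟨w, hw⟩ | ⟨w, hw⟩
        · omega
        · exfalso
          obtain ⟨z, hz⟩ := hmo
          have : N = 2 * ((2*z+1) * w + z) + 1 := by rw [hc, hw, hz]; ring
          omega
      obtain ⟨d, hd⟩ : 2 ∣ c := ⟨c / 2, by omega⟩
      refine ⟨d, ?_⟩
      have : N = 2 * (m * d) := by rw [hc, hd]; ring
      omega
    exact iff_of_true hL hR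

lemma sl2_pow_formula {K : Type*} [Field K] (l g : K) (hl0 : l ≠ 0)
    (hd : l - l⁻¹ ≠ 0) (hg : g = l + l⁻¹)
    (D : Matrix (Fin 2) (Fin 2) K) (hD : D ^ 2 = g • D - 1) (k : ℕ) :
    D ^ (k + 1) = ((l ^ (k+1) - (l⁻¹) ^ (k+1)) / (l - l⁻¹)) • D
      - ((l ^ k - (l⁻¹) ^ k) / (l - l⁻¹)) • (1 : Matrix (Fin 2) (Fin 2) K) := by
  induction k with
  | zero => simp [div_self hd]
  | succ k ih =>
    have h1 : (l ^ (k+1) - l⁻¹ ^ (k+1)) / (l - l⁻¹) * g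
        - (l ^ k - l⁻¹ ^ k) / (l - l⁻¹)
        = (l ^ (k+1+1) - l⁻¹ ^ (k+1+1)) / (l - l⁻¹) := by
      rw [hg, div_mul_eq_mul_div, div_sub_div_same]
      congr 1
      linear_combination (l ^ k - l⁻¹ ^ k) * (mul_inv_cancel₀ hl0)
    rw [pow_succ, ih, sub_mul, smul_mul_assoc, smul_mul_assoc, one_mul, ← pow_two, hD, ← h1]
    module

lemma sl2_pow_scalar_iff {K : Type*} [Field K] (l g : K) (hl0 : l ≠ 0)
    (hd : l - l⁻¹ ≠ 0) (hg : g = l + l⁻¹)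
    (D : Matrix (Fin 2) (Fin 2) K) (hD : D ^ 2 = g • D - 1)
    (hns : ∀ c : K, D ≠ c • (1 : Matrix (Fin 2) (Fin 2) K))
    (k : ℕ) (c : K) (hc : c = 1 ∨ c = -1) (hk : 0 < k) :
    D ^ k = c • (1 : Matrix (Fin 2) (Fin 2) K) ↔ l ^ k = c := by
  obtain ⟨j, rfl⟩ : ∃ j, k = j + 1 := ⟨k - 1, by omega⟩
  have hcinv : c⁻¹ = c := by rcases hc with rfl | rfl <;> norm_num
  have hc0 : c ≠ 0 := by rcases hc with rfl | rfl <;> norm_num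
  have key : ∀ c' : K, c' = 1 ∨ c' = -1 → l ^ (j+1) = c' →
      D ^ (j+1) = c' • (1 : Matrix (Fin 2) (Fin 2) K) := by
    intro c' hc' hl
    have hc'inv : c'⁻¹ = c' := by rcases hc' with rfl | rfl <;> norm_num
    have hc'0 : c' ≠ 0 := by rcases hc' with rfl | rfl <;> norm_num
    have hinvpow : (l⁻¹) ^ (j+1) = c' := by
      rw [inv_pow, hl, hc'inv]
    have hnum : l ^ (j+1) - (l⁻¹) ^ (j+1) = 0 := by rw [hl, hinvpow, sub_self]
    have hj : l ^ j - (l⁻¹) ^ j = -c' * (l - l⁻¹) := by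
      have h1 : l ^ j * l = c' := by rw [← pow_succ, hl]
      have h2 : (l⁻¹) ^ j * l⁻¹ = c' := by rw [← pow_succ, hinvpow]
      have hil : l * l⁻¹ = 1 := mul_inv_cancel₀ hl0
      have h3 : l ^ j = c' * l⁻¹ := by
        field_simp at h1 ⊢
        linear_combination h1
      have h4 : (l⁻¹) ^ j = c' * l := by
        have : (l⁻¹) ^ j * l⁻¹ * l = c' * l := by rw [h2]
        rwa [mul_assoc, inv_mul_cancel₀ hl0, mul_one] at this
      rw [h3, h4]; ring
    rw [sl2_pow_formula l g hl0 hd hg D hD, hnum, hj]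
    rw [zero_div, mul_div_assoc, div_self hd, mul_one]
    simp
  constructor
  · intro h
    have hform := sl2_pow_formula l g hl0 hd hg D hD j
    rw [h] at hform
    by_cases hs : (l ^ (j+1) - (l⁻¹) ^ (j+1)) / (l - l⁻¹) = 0
    · have hnum : l ^ (j+1) = (l⁻¹) ^ (j+1) := by
        rcases div_eq_zero_iff.mp hs with h0 | h0
        · exact sub_eq_zero.mp h0
        · exact absurd h0 hd
      have hsq : l ^ (j+1) * l ^ (j+1) = 1 := by
        calc l ^ (j+1) * l ^ (j+1) = l ^ (j+1) * (l⁻¹) ^ (j+1) := by rw [hnum]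
        _ = (l * l⁻¹) ^ (j+1) := by rw [mul_pow]
        _ = 1 := by rw [mul_inv_cancel₀ hl0, one_pow]
      rcases mul_self_eq_one_iff.mp hsq with h1 | h1
      · have := key 1 (Or.inl rfl) h1
        rw [this] at h
        have : c = 1 := by
          have := congrFun (congrFun h 0) 0
          simpa using this.symm
        rw [h1, this]
      · have := key (-1) (Or.inr rfl) h1
        rw [this] at h
        have : c = -1 := by
          have := congrFun (congrFun h 0) 0
          simpa using this.symm
        rw [h1, this]
    · exfalso
      apply hns (((c + (l ^ j - (l⁻¹) ^ j) / (l - l⁻¹))) / ((l ^ (j+1) - (l⁻¹) ^ (j+1)) / (l - l⁻¹)))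
      have : (((l ^ (j+1) - (l⁻¹) ^ (j+1)) / (l - l⁻¹)))⁻¹ •
          (((l ^ (j+1) - (l⁻¹) ^ (j+1)) / (l - l⁻¹)) • D) = D := by
        rw [smul_smul, inv_mul_cancel₀ hs, one_smul]
      rw [← this]
      have heq : ((l ^ (j+1) - (l⁻¹) ^ (j+1)) / (l - l⁻¹)) • D
          = (c + (l ^ j - (l⁻¹) ^ j) / (l - l⁻¹)) • (1 : Matrix (Fin 2) (Fin 2) K) := by
        rw [add_smul]
        exact sub_eq_iff_eq_add.mp hform.symm
      rw [heq, smul_smul]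
      congr 1
      ring
  · intro h
    exact key c hc h

lemma cayley_hamilton_fin_two {K : Type*} [CommRing K] (M : Matrix (Fin 2) (Fin 2) K) :
    M ^ 2 = M.trace • M - M.det • 1 := by
  rw [pow_two]
  have htr := Matrix.trace_fin_two M
  have hdet := Matrix.det_fin_two M
  ext i j
  rw [Matrix.sub_apply, Matrix.smul_apply, Matrix.smul_apply, Matrix.mul_apply,
    Fin.sum_univ_two, htr, hdet]
  fin_cases i <;> fin_cases j <;>
    simp [Matrix.one_apply, smul_eq_mul] <;> ring

lemma isSquare_iff_frobfix {F K : Type*} [Field F] [Fintype F] [Field K]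
    (f : F →+* K) (hrc2 : ringChar F ≠ 2) (x : F) (hx : x ≠ 0) (w : K)
    (hw : w ^ 2 = f x) :
    IsSquare x ↔ w ^ (Fintype.card F - 1) = 1 := by
  have hq_odd := FiniteField.odd_card_of_char_ne_two hrc2
  have hq2 : 1 < Fintype.card F := Fintype.one_lt_card
  have hdiv : 2 * (Fintype.card F / 2) = Fintype.card F - 1 := by omega
  have hkey : w ^ (Fintype.card F - 1) = f x ^ (Fintype.card F / 2) := by
    rw [← hw, ← pow_mul, hdiv]
  rw [FiniteField.isSquare_iff hrc2 hx, hkey]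
  constructor
  · intro h
    rw [← map_pow, h, _root_.map_one]
  · intro h
    apply f.injective
    rw [map_pow, h, _root_.map_one]

end Aux

theorem psl2_aux
    {F : Type*} [Field F] [Fintype F] [DecidableEq F]
    {K : Type*} [Field K] [IsAlgClosed K]
    (p : ℕ) [Fact p.Prime] [CharP F p] [CharP K p] (f : F →+* K)
    (hp : p ≠ 2) (C : SpecialLinearGroup (Fin 2) F)
    (h2 : Matrix.trace (C : Matrix (Fin 2) (Fin 2) F) ≠ 2)
    (h2' : Matrix.trace (C : Matrix (Fin 2) (Fin 2) F) ≠ -2) :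
    IsQGood (Fintype.card F) (orderOf (QuotientGroup.mk C : PSL(2, F))) ↔
      (IsSquare (2 + Matrix.trace (C : Matrix (Fin 2) (Fin 2) F)) ∨
        IsSquare (2 - Matrix.trace (C : Matrix (Fin 2) (Fin 2) F))) := by
  classical
  have hrc : ringChar F = p := ringChar.eq F p
  have hrc2 : ringChar F ≠ 2 := by rw [hrc]; exact hp
  have hq_odd : Fintype.card F % 2 = 1 := FiniteField.odd_card_of_char_ne_two hrc2
  have hq3 : 3 ≤ Fintype.card F := by
    have := Fintype.one_lt_card (α := F)
    omega
  set q := Fintype.card F with hq_def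
  set γ := Matrix.trace (C : Matrix (Fin 2) (Fin 2) F) with hγ_def
  have hfinj : Function.Injective f := f.injective
  set g : K := f γ with hg_def
  have hK2 : (2 : K) ≠ 0 := Ring.two_ne_zero (by rw [ringChar.eq K p]; exact hp)
  have hK1n : (1 : K) ≠ -1 := fun h => hK2 (by linear_combination h)
  have hg2 : g ≠ 2 := fun h => h2 (hfinj (by rw [map_ofNat]; exact h))
  have hg2' : g ≠ -2 := fun h => h2' (hfinj (by rw [map_neg, map_ofNat]; exact h))
  -- the eigenvalue l
  obtain ⟨l, hl⟩ := IsAlgClosed.exists_root (k := K)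
    (Polynomial.C 1 * Polynomial.X ^ 2 + Polynomial.C (-g) * Polynomial.X + Polynomial.C 1)
    (by rw [Polynomial.degree_quadratic one_ne_zero]; norm_num)
  have hl_eq : l ^ 2 - g * l + 1 = 0 := by
    have := hl
    simp only [Polynomial.IsRoot.def, Polynomial.eval_add, Polynomial.eval_mul,
      Polynomial.eval_pow, Polynomial.eval_C, Polynomial.eval_X] at this
    linear_combination this
  have hl0 : l ≠ 0 := by
    intro h
    rw [h] at hl_eq
    simp at hl_eq
  have hprod : l * l⁻¹ = 1 := mul_inv_cancel₀ hl0
  have hinv : l⁻¹ = g - l := by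
    have h : (g - l) * l = 1 := by linear_combination -hl_eq
    exact (eq_inv_of_mul_eq_one_left h).symm
  have hsum : l + l⁻¹ = g := by rw [hinv]; ring
  have hl1 : l ≠ 1 := by
    intro h
    rw [h] at hl_eq
    exact hg2 (by linear_combination -hl_eq)
  have hlm1 : l ≠ -1 := by
    intro h
    rw [h] at hl_eq
    exact hg2' (by linear_combination hl_eq)
  have hd : l - l⁻¹ ≠ 0 := by
    intro h
    have h' : l = l⁻¹ := sub_eq_zero.mp h
    have hh : l * l = 1 := by nth_rewrite 2 [h']; exact hprod
    rcases mul_self_eq_one_iff.mp hh with h1 | h1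
    · exact hl1 h1
    · exact hlm1 h1
  -- the matrix over K
  set A := (C : Matrix (Fin 2) (Fin 2) F) with hA_def
  set D := f.mapMatrix A with hD_def
  have htrD : Matrix.trace D = g := by
    rw [hg_def, hγ_def, Matrix.trace_fin_two, Matrix.trace_fin_two, map_add]
    rfl
  have hdetD : D.det = 1 := by
    rw [hD_def, ← RingHom.map_det, hA_def, Matrix.SpecialLinearGroup.det_coe, _root_.map_one]
  have hD2 : D ^ 2 = g • D - 1 := by
    have := cayley_hamilton_fin_two D
    rw [htrD, hdetD, one_smul] at this
    exact this
  have hns : ∀ c : K, D ≠ c • (1 : Matrix (Fin 2) (Fin 2) K) := by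
    intro c h
    have htr : g = c * 2 := by
      rw [← htrD, h, Matrix.trace_smul, Matrix.trace_one, smul_eq_mul]
      norm_num
    have hdet : c ^ 2 = 1 := by
      rw [← hdetD, h, Matrix.det_smul, Matrix.det_one]
      simp
    rcases mul_self_eq_one_iff.mp (show c * c = 1 by rw [← pow_two]; exact hdet) with h1 | h1
    · exact hg2 (by rw [htr, h1]; ring)
    · exact hg2' (by rw [htr, h1]; ring)
  have hmap_inj : ∀ X Y : Matrix (Fin 2) (Fin 2) F, f.mapMatrix X = f.mapMatrix Y → X = Y := by
    intro X Y h
    ext i j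
    apply hfinj
    have := congrFun (congrFun (congrArg (fun M => (M : Matrix (Fin 2) (Fin 2) K)) h) i) j
    simpa [RingHom.mapMatrix_apply, Matrix.map_apply] using this
  have hDpow : ∀ k : ℕ, D ^ k = f.mapMatrix (A ^ k) := fun k => (map_pow f.mapMatrix A k).symm
  have hone : ∀ k : ℕ, (A ^ k = 1) ↔ l ^ k = 1 := by
    intro k
    rcases Nat.eq_zero_or_pos k with rfl | hk
    · simp
    · rw [← sl2_pow_scalar_iff l g hl0 hd hsum.symm D hD2 hns k 1 (Or.inl rfl) hk, one_smul,
        hDpow]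
      constructor
      · intro h
        rw [h, _root_.map_one]
      · intro h
        apply hmap_inj
        rw [_root_.map_one]
        exact h
  have hneg : ∀ k : ℕ, (A ^ k = -1) ↔ l ^ k = -1 := by
    intro k
    rcases Nat.eq_zero_or_pos k with rfl | hk
    · simp only [pow_zero]
      constructor
      · intro h
        exfalso
        have := congrFun (congrFun h 0) 0
        simp [Matrix.one_apply] at this
        exact Ring.two_ne_zero hrc2 (by linear_combination this)
      · intro h
        exact absurd h hK1n
    · rw [← sl2_pow_scalar_iff l g hl0 hd hsum.symm D hD2 hns k (-1) (Or.inr rfl) hk,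
        neg_smul, one_smul, hDpow]
      constructor
      · intro h
        rw [h, map_neg, _root_.map_one]
      · intro h
        apply hmap_inj
        rw [map_neg, _root_.map_one]
        exact h
  -- order in the quotient
  have hcenter : ∀ k : ℕ, ((QuotientGroup.mk C : PSL(2, F)) ^ k = 1) ↔ (orderOf l ∣ 2 * k) := by
    intro k
    have h1 : ((QuotientGroup.mk C : PSL(2, F)) ^ k = 1) ↔
        C ^ k ∈ Subgroup.center (SpecialLinearGroup (Fin 2) F) := by
      rw [show (QuotientGroup.mk C : PSL(2, F)) ^ k = QuotientGroup.mk (C ^ k) from rfl]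
      exact QuotientGroup.eq_one_iff _
    rw [h1, Matrix.SpecialLinearGroup.mem_center_iff]
    have hcoe : ((C ^ k : SpecialLinearGroup (Fin 2) F) : Matrix (Fin 2) (Fin 2) F) = A ^ k :=
      Matrix.SpecialLinearGroup.coe_pow C k
    constructor
    · rintro ⟨r, hr, hscal⟩
      have hr2 : r * r = 1 := by
        rw [← pow_two]
        simpa [Fintype.card_fin] using hr
      rcases mul_self_eq_one_iff.mp hr2 with rfl | rfl
      · have hA1 : A ^ k = 1 := by rw [← hcoe, ← hscal, _root_.map_one]
        exact dvd_mul_of_dvd_right (orderOf_dvd_of_pow_eq_one ((hone k).mp hA1)) 2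
      · have hA1 : A ^ k = -1 := by rw [← hcoe, ← hscal, map_neg, _root_.map_one]
        have hlk := (hneg k).mp hA1
        apply orderOf_dvd_of_pow_eq_one
        rw [mul_comm, pow_mul, hlk]
        norm_num
    · intro hdvd
      have hl2k : l ^ (2 * k) = 1 := orderOf_dvd_iff_pow_eq_one.mp hdvd
      have hsq : l ^ k * l ^ k = 1 := by
        rw [← pow_add]
        rw [show k + k = 2 * k by ring]
        exact hl2k
      rcases mul_self_eq_one_iff.mp hsq with h1 | h1
      · exact ⟨1, by simp, by rw [_root_.map_one, hcoe, (hone k).mpr h1]⟩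
      · exact ⟨-1, by simp [Fintype.card_fin], by rw [map_neg, _root_.map_one, hcoe, (hneg k).mpr h1]⟩
  set m := orderOf l with hm_def
  set t := orderOf (QuotientGroup.mk C : PSL(2, F)) with ht_def
  have htm : m ≠ 0 → t = m / Nat.gcd m 2 := by
    intro hm0
    have hgcd2 := Nat.gcd_dvd_right m 2
    have hgcdm := Nat.gcd_dvd_left m 2
    apply Nat.dvd_antisymm
    · apply orderOf_dvd_of_pow_eq_one
      rw [hcenter]
      rcases (Nat.dvd_prime Nat.prime_two).mp hgcd2 with h | h
      · rw [h, Nat.div_one]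
        exact dvd_mul_left m 2
      · obtain ⟨u, hu⟩ := hgcdm
        rw [h] at hu
        rw [h]
        have h22 : 2 * (m / 2) = m := by omega
        rw [h22]
    · have hpow : (QuotientGroup.mk C : PSL(2, F)) ^ t = 1 := pow_orderOf_eq_one _
      have hm2t : m ∣ 2 * t := (hcenter t).mp hpow
      rcases (Nat.dvd_prime Nat.prime_two).mp hgcd2 with h | h
      · rw [h, Nat.div_one]
        exact Nat.Coprime.dvd_of_dvd_mul_left h hm2t
      · obtain ⟨u, hu⟩ := hgcdm
        rw [h] at hu
        obtain ⟨c, hc⟩ := hm2t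
        have h2t : 2 * t = 2 * (u * c) := by rw [hc, hu]; ring
        have htuc : t = u * c := by omega
        have hm2u : m / 2 = u := by omega
        rw [h, hm2u]
        exact ⟨c, htuc⟩
  -- frobenius
  obtain ⟨nn, hpp, hcard⟩ := FiniteField.card F p
  have hfrob_add : ∀ x y : K, (x + y) ^ q = x ^ q + y ^ q := by
    intro x y
    rw [hq_def, hcard]
    exact add_pow_char_pow x y p _
  have hfrob_sub : ∀ x y : K, (x - y) ^ q = x ^ q - y ^ q := by
    intro x y
    rw [hq_def, hcard]
    exact sub_pow_char_pow x y _
  have hgq : g ^ q = g := by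
    rw [hg_def, ← map_pow, FiniteField.pow_card]
  have hq0 : q ≠ 0 := by omega
  have hlq : l ^ q = l ∨ l ^ q = l⁻¹ := by
    have hroot : (l ^ q) ^ 2 - g * (l ^ q) + 1 = 0 := by
      have h0 : (l ^ 2 - g * l + 1) ^ q = 0 := by
        rw [hl_eq, zero_pow hq0]
      calc (l ^ q) ^ 2 - g * (l ^ q) + 1
          = (l ^ 2 - g * l + 1) ^ q := by
            rw [hfrob_add, hfrob_sub, one_pow, mul_pow, hgq, ← pow_mul, ← pow_mul,
              mul_comm 2 q]
        _ = 0 := h0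
    have hfac : (l ^ q - l) * (l ^ q - l⁻¹) = 0 := by
      linear_combination hroot + hprod - l ^ q * hsum
    rcases mul_eq_zero.mp hfac with h | h
    · exact Or.inl (sub_eq_zero.mp h)
    · exact Or.inr (sub_eq_zero.mp h)
  -- square roots
  obtain ⟨μ, hμ⟩ := IsAlgClosed.exists_pow_nat_eq l (n := 2) (by norm_num)
  have hμ0 : μ ≠ 0 := by
    intro h
    rw [h] at hμ
    exact hl0 (by rw [← hμ]; ring)
  have hμprod : μ * μ⁻¹ = 1 := mul_inv_cancel₀ hμ0
  have hμinv2 : (μ⁻¹) ^ 2 = l⁻¹ := by rw [inv_pow, hμ]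
  obtain ⟨i, hi⟩ := IsAlgClosed.exists_pow_nat_eq (-1 : K) (n := 2) (by norm_num)
  have hγ2 : (2 : F) + γ ≠ 0 := fun h => h2' (by linear_combination h)
  have hγ2' : (2 : F) - γ ≠ 0 := fun h => h2 (by linear_combination -h)
  set ν : K := μ + μ⁻¹ with hν_def
  set η : K := i * (μ - μ⁻¹) with hη_def
  have hν2 : ν ^ 2 = f (2 + γ) := by
    rw [map_add, map_ofNat, ← hg_def, ← hsum, hν_def]
    linear_combination hμ + hμinv2 + 2 * hμprod
  have hη2 : η ^ 2 = f (2 - γ) := by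
    rw [map_sub, map_ofNat, ← hg_def, ← hsum, hη_def]
    linear_combination (μ^2 - 2*(μ*μ⁻¹) + (μ⁻¹)^2) * hi - hμ - hμinv2 + 2 * hμprod
  have hν0 : ν ≠ 0 := by
    intro h
    have : f (2 + γ) = 0 := by rw [← hν2, h]; ring
    exact hγ2 (hfinj (by rw [this, map_zero]))
  have hη0 : η ≠ 0 := by
    intro h
    have : f (2 - γ) = 0 := by rw [← hη2, h]; ring
    exact hγ2' (hfinj (by rw [this, map_zero]))
  have hsq1 : IsSquare ((2 : F) + γ) ↔ ν ^ (q - 1) = 1 :=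
    isSquare_iff_frobfix f hrc2 _ hγ2 ν hν2
  have hsq2 : IsSquare ((2 : F) - γ) ↔ η ^ (q - 1) = 1 :=
    isSquare_iff_frobfix f hrc2 _ hγ2' η hη2
  -- i ^ (q-1)
  have hipm : i ^ (q - 1) = 1 ∨ i ^ (q - 1) = -1 := by
    apply mul_self_eq_one_iff.mp
    rw [← pow_add]
    have hEven : Even ((q-1) + (q-1)) := ⟨q - 1, rfl⟩
    obtain ⟨j, hj⟩ : ∃ j, (q - 1) + (q - 1) = 2 * j := ⟨q - 1, by ring⟩
    rw [hj, pow_mul, hi]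
    exact (neg_one_pow_eq_one_iff_even (fun h => hK1n h.symm)).mpr ⟨(q-1)/2, by omega⟩
  have hi4 : i ^ (q - 1) = 1 ↔ 4 ∣ q - 1 := by
    constructor
    · intro h
      obtain ⟨j, hj⟩ : ∃ j, q - 1 = 2 * j := ⟨(q-1)/2, by omega⟩
      rw [hj, pow_mul, hi] at h
      obtain ⟨w, hw⟩ := (neg_one_pow_eq_one_iff_even (fun hh => hK1n hh.symm)).mp h
      exact ⟨w, by omega⟩
    · rintro ⟨k, hk⟩
      rw [hk, pow_mul, show i ^ 4 = 1 from by rw [show (4:ℕ) = 2*2 from rfl, pow_mul, hi]; norm_num,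
        one_pow]
  have h1q : q - 1 + 1 = q := by omega
  -- main case split
  rcases hlq with hcase | hcase
  · -- split case : l ∈ F, N = q - 1
    have hNl : l ^ (q - 1) = 1 := by
      have h : l ^ (q-1) * l = 1 * l := by
        rw [← pow_succ, h1q, hcase, one_mul]
      exact mul_right_cancel₀ hl0 h
    have hmN : m ∣ q - 1 := orderOf_dvd_of_pow_eq_one hNl
    have hm0 : m ≠ 0 := by
      intro h
      rw [h] at hmN
      have := Nat.eq_zero_of_zero_dvd hmN
      omega
    have hm1 : m ≠ 1 := fun h => hl1 (orderOf_eq_one_iff.mp h)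
    have hm2 : m ≠ 2 := by
      intro h
      have hpow := pow_orderOf_eq_one l
      rw [hm_def] at h
      rw [h] at hpow
      rcases mul_self_eq_one_iff.mp (show l * l = 1 by rw [← pow_two]; exact hpow) with h1 | h1
      · exact hl1 h1
      · exact hlm1 h1
    have hm3 : 2 < m := by omega
    have hNdiv : 2 * ((q - 1) / 2) = q - 1 := by omega
    set ε : K := l ^ ((q - 1) / 2) with hε_def
    have hε2 : ε * ε = 1 := by
      rw [hε_def, ← pow_add, ← two_mul, hNdiv]
      exact hNl
    have hεpm : ε = 1 ∨ ε = -1 := mul_self_eq_one_iff.mp hε2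
    have hεinv : ε⁻¹ = ε := by
      rcases hεpm with h | h <;> rw [h] <;> norm_num
    have hμε : μ ^ (q - 1) = ε := by
      rw [hε_def, ← hμ, ← pow_mul]
      congr 1
      omega
    have hμq : μ ^ q = ε * μ := by
      rw [← h1q, pow_succ, hμε]
    have hμinvq : (μ⁻¹) ^ q = ε * μ⁻¹ := by
      rw [inv_pow, hμq, mul_inv, hεinv]
    have hνq : ν ^ q = ε * ν := by
      rw [hν_def, hfrob_add, hμq, hμinvq]
      ring
    have hνpow : ν ^ (q - 1) = ε := by
      have h : ν ^ (q-1) * ν = ε * ν := by rw [← pow_succ, h1q, hνq]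
      exact mul_right_cancel₀ hν0 h
    have hηq : η ^ q = i ^ q * (ε * (μ - μ⁻¹)) := by
      rw [hη_def, mul_pow, hfrob_sub, hμq, hμinvq]
      ring
    have hηpow : η ^ (q - 1) = i ^ (q - 1) * ε := by
      have h : η ^ (q-1) * η = (i ^ (q-1) * ε) * η := by
        rw [← pow_succ, h1q, hηq, hη_def]
        have : i ^ (q - 1) * i = i ^ q := by rw [← pow_succ, h1q]
        rw [← this]
        ring
      exact mul_right_cancel₀ hη0 h
    rw [htm hm0, qgood_arith q m (q - 1) hq_odd hq3 (Or.inl rfl) hmN hm3, hsq1, hsq2,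
      hνpow, hηpow]
    have hmdvd : m ∣ (q - 1) / 2 ↔ ε = 1 := by
      rw [hε_def]
      exact orderOf_dvd_iff_pow_eq_one
    rw [hmdvd]
    have hiff : ¬ (4 ∣ q - 1) ↔ i ^ (q - 1) = -1 := by
      rw [← hi4]
      rcases hipm with hj | hj <;> rw [hj]
      · exact iff_of_false (by simp) hK1n
      · exact iff_of_true (fun hh => hK1n hh.symm) rfl
    rw [hiff]
    rcases hεpm with he | he <;> rw [he]
    · simp
    · constructor
      · rintro (h | h)
        · exact absurd h (fun hh => hK1n hh.symm)
        · right
          rw [h]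
          norm_num
      · rintro (h | h)
        · exact absurd h (fun hh => hK1n hh.symm)
        · right
          linear_combination -h
  · -- nonsplit case : N = q + 1
    have hNl : l ^ (q + 1) = 1 := by
      rw [pow_succ, hcase, inv_mul_cancel₀ hl0]
    have hmN : m ∣ q + 1 := orderOf_dvd_of_pow_eq_one hNl
    have hm0 : m ≠ 0 := by
      intro h
      rw [h] at hmN
      have := Nat.eq_zero_of_zero_dvd hmN
      omega
    have hm1 : m ≠ 1 := fun h => hl1 (orderOf_eq_one_iff.mp h)
    have hm2 : m ≠ 2 := by
      intro h
      have hpow := pow_orderOf_eq_one l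
      rw [hm_def] at h
      rw [h] at hpow
      rcases mul_self_eq_one_iff.mp (show l * l = 1 by rw [← pow_two]; exact hpow) with h1 | h1
      · exact hl1 h1
      · exact hlm1 h1
    have hm3 : 2 < m := by omega
    have hNdiv : 2 * ((q + 1) / 2) = q + 1 := by omega
    set ε : K := l ^ ((q + 1) / 2) with hε_def
    have hε2 : ε * ε = 1 := by
      rw [hε_def, ← pow_add, ← two_mul, hNdiv]
      exact hNl
    have hεpm : ε = 1 ∨ ε = -1 := mul_self_eq_one_iff.mp hε2
    have hεinv : ε⁻¹ = ε := by
      rcases hεpm with h | h <;> rw [h] <;> norm_num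
    have hμε : μ ^ (q + 1) = ε := by
      rw [hε_def, ← hμ, ← pow_mul]
      congr 1
      omega
    have hμq : μ ^ q = ε * μ⁻¹ := by
      apply mul_right_cancel₀ hμ0
      rw [← pow_succ, hμε, mul_assoc, inv_mul_cancel₀ hμ0, mul_one]
    have hμinvq : (μ⁻¹) ^ q = ε * μ := by
      rw [inv_pow, hμq, mul_inv, hεinv, inv_inv]
    have hνq : ν ^ q = ε * ν := by
      rw [hν_def, hfrob_add, hμq, hμinvq]
      ring
    have hνpow : ν ^ (q - 1) = ε := by
      have h : ν ^ (q-1) * ν = ε * ν := by rw [← pow_succ, h1q, hνq]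
      exact mul_right_cancel₀ hν0 h
    have hηq : η ^ q = i ^ q * (-ε * (μ - μ⁻¹)) := by
      rw [hη_def, mul_pow, hfrob_sub, hμq, hμinvq]
      ring
    have hηpow : η ^ (q - 1) = -(i ^ (q - 1) * ε) := by
      have h : η ^ (q-1) * η = (-(i ^ (q - 1) * ε)) * η := by
        rw [← pow_succ, h1q, hηq, hη_def]
        have hii : i ^ (q - 1) * i = i ^ q := by rw [← pow_succ, h1q]
        rw [← hii]
        ring
      exact mul_right_cancel₀ hη0 h
    rw [htm hm0, qgood_arith q m (q + 1) hq_odd hq3 (Or.inr rfl) hmN hm3, hsq1, hsq2,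
      hνpow, hηpow]
    have hmdvd : m ∣ (q + 1) / 2 ↔ ε = 1 := by
      rw [hε_def]
      exact orderOf_dvd_iff_pow_eq_one
    rw [hmdvd]
    have hiff : ¬ (4 ∣ q + 1) ↔ i ^ (q - 1) = 1 := by
      rw [hi4]
      omega
    rw [hiff]
    rcases hεpm with he | he <;> rw [he]
    · simp
    · constructor
      · rintro (h | h)
        · exact absurd h (fun hh => hK1n hh.symm)
        · right
          rw [h]
          norm_num
      · rintro (h | h)
        · exact absurd h (fun hh => hK1n hh.symm)
        · right
          linear_combination h

/-- For odd `q`: if `C ∈ SL₂(q)` has trace `γ ≠ ±2` and its image in `PSL₂(q)` has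
order `t`, then `t` is `q`-good iff `2 + γ` or `2 - γ` is a square in `F_q`. -/
theorem psl2_odd_qGood_iff_square
    {F : Type*} [Field F] [Fintype F] [DecidableEq F] (p : ℕ) [Fact p.Prime] [CharP F p]
    (hp : p ≠ 2) (C : SpecialLinearGroup (Fin 2) F)
    (h2 : Matrix.trace (C : Matrix (Fin 2) (Fin 2) F) ≠ 2)
    (h2' : Matrix.trace (C : Matrix (Fin 2) (Fin 2) F) ≠ -2) :
    IsQGood (Fintype.card F) (orderOf (QuotientGroup.mk C : PSL(2, F))) ↔
      (IsSquare (2 + Matrix.trace (C : Matrix (Fin 2) (Fin 2) F)) ∨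
        IsSquare (2 - Matrix.trace (C : Matrix (Fin 2) (Fin 2) F))) := by
  haveI : CharP (AlgebraicClosure F) p :=
    charP_of_injective_algebraMap (algebraMap F (AlgebraicClosure F)).injective p
  exact psl2_aux p (algebraMap F (AlgebraicClosure F)) hp C h2 h2'
end

section
/- Let q be an odd prime power. Call α ∈ F_q a bad trace if α ≠ ±2 and neither 2 + α nor 2 − α is a square in F_q. If q ≡ 1 (mod 4) then F_q contains exactly (q − 1)/4 bad traces, and if q ≡ 3 (mod 4) then F_q contains exactly (q + 1)/4 bad traces. -/
open Matrix
open scoped MatrixGroups Pointwise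

section Aux

variable {F : Type*} [Field F] [Fintype F] [DecidableEq F]

lemma quadChar_inv_aux (x : F) :
    quadraticChar F x⁻¹ = quadraticChar F x := by
  rcases eq_or_ne x 0 with rfl | hx
  · simp
  · have h1 : quadraticChar F x⁻¹ * quadraticChar F x = 1 := by
      rw [← _root_.map_mul, inv_mul_cancel₀ hx, _root_.map_one]
    have h2 : quadraticChar F x * quadraticChar F x = 1 := by
      rw [← pow_two]; exact quadraticChar_sq_one hx
    have hz : quadraticChar F x ≠ 0 := fun h => hx (quadraticChar_eq_zero_iff.mp h)
    have := h1.trans h2.symm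
    exact mul_right_cancel₀ hz this

lemma jacobi_quad (hF : ringChar F ≠ 2) :
    ∑ t : F, quadraticChar F t * quadraticChar F (1 - t) = - quadraticChar F (-1) := by
  have h := jacobiSum_nontrivial_inv (quadraticChar_ne_one hF)
  rw [jacobiSum] at h
  rw [← h]
  refine Finset.sum_congr rfl fun t _ => ?_
  rw [MulChar.inv_apply', quadChar_inv_aux]

end Aux

/-- For odd `q`, the number of bad traces `α` (i.e. `α ≠ ±2` and neither `2 + α` nor
`2 - α` is a square in `F_q`) is `(q - 1)/4` if `q ≡ 1 (mod 4)` and `(q + 1)/4` if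
`q ≡ 3 (mod 4)`. -/
theorem card_bad_traces
    {F : Type*} [Field F] [Fintype F] [DecidableEq F] (hodd : Odd (Fintype.card F)) :
    (Fintype.card F % 4 = 1 →
      {α : F | α ≠ 2 ∧ α ≠ -2 ∧ ¬IsSquare (2 + α) ∧ ¬IsSquare (2 - α)}.ncard =
        (Fintype.card F - 1) / 4) ∧
    (Fintype.card F % 4 = 3 →
      {α : F | α ≠ 2 ∧ α ≠ -2 ∧ ¬IsSquare (2 + α) ∧ ¬IsSquare (2 - α)}.ncard =
        (Fintype.card F + 1) / 4) := by
  classical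
  have hF : ringChar F ≠ 2 := by
    intro h
    have h2 := FiniteField.even_card_of_char_two (F := F) h
    rw [Nat.odd_iff] at hodd
    omega
  have h2F : (2 : F) ≠ 0 := Ring.two_ne_zero hF
  have h4F : (4 : F) ≠ 0 := by
    intro h
    apply h2F
    have h22 : (2 : F) * 2 = 0 := by rw [show (2:F) * 2 = 4 by norm_num, h]
    rcases mul_eq_zero.mp h22 with h | h <;> exact h
  set χ := quadraticChar F with hχdef
  have hχ4 : χ 4 = 1 := by
    rw [show (4 : F) = 2 ^ 2 by norm_num]
    exact quadraticChar_sq_one' h2F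
  set P : F → Prop := fun α => α ≠ 2 ∧ α ≠ -2 ∧ ¬IsSquare (2 + α) ∧ ¬IsSquare (2 - α) with hP
  -- pointwise indicator identity
  have hpoint : ∀ α : F, (1 - χ (2 + α)) * (1 - χ (2 - α)) = if P α then 4 else 0 := by
    intro α
    rcases eq_or_ne α (-2) with rfl | ha
    · rw [if_neg (fun h => h.2.1 rfl), show (2 : F) + -2 = 0 by ring,
        show (2 : F) - -2 = 4 by ring, MulChar.map_zero, hχ4]
      ring
    rcases eq_or_ne α 2 with rfl | hb
    · rw [if_neg (fun h => h.1 rfl), show (2 : F) - 2 = 0 by ring,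
        show (2 : F) + 2 = 4 by ring, MulChar.map_zero, hχ4]
      ring
    have ha0 : 2 + α ≠ 0 := fun h => ha (by linear_combination h)
    have hb0 : 2 - α ≠ 0 := fun h => hb (by linear_combination -h)
    by_cases hs1 : IsSquare (2 + α) <;> by_cases hs2 : IsSquare (2 - α)
    · rw [(quadraticChar_one_iff_isSquare ha0).mpr hs1]
      simp [hP, hs1]
    · rw [(quadraticChar_one_iff_isSquare ha0).mpr hs1]
      simp [hP, hs1]
    · rw [(quadraticChar_one_iff_isSquare hb0).mpr hs2]
      simp [hP, hs2]
    · rw [quadraticChar_neg_one_iff_not_isSquare.mpr hs1,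
        quadraticChar_neg_one_iff_not_isSquare.mpr hs2]
      rw [if_pos ⟨hb, ha, hs1, hs2⟩]
      norm_num
  have hsum1 : ∑ α : F, χ (2 + α) = 0 := by
    rw [← quadraticChar_sum_zero hF]
    exact Fintype.sum_equiv (Equiv.addLeft (2 : F)) _ _ (fun α => rfl)
  have hsum2 : ∑ α : F, χ (2 - α) = 0 := by
    rw [← quadraticChar_sum_zero hF]
    exact Fintype.sum_equiv (Equiv.subLeft (2 : F)) _ _ (fun α => rfl)
  have hsum3 : ∑ α : F, χ (2 + α) * χ (2 - α) = - χ (-1) := by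
    rw [← jacobi_quad hF]
    symm
    refine Fintype.sum_equiv ((Equiv.mulLeft₀ (4 : F) h4F).trans (Equiv.subRight (2 : F))) _ _
      (fun t => ?_)
    show χ t * χ (1 - t) = χ (2 + (4 * t - 2)) * χ (2 - (4 * t - 2))
    rw [show (2 : F) + (4 * t - 2) = 4 * t by ring,
      show (2 : F) - (4 * t - 2) = 4 * (1 - t) by ring,
      _root_.map_mul, _root_.map_mul, hχ4, one_mul, one_mul]
  have hexp : ∑ α : F, (1 - χ (2 + α)) * (1 - χ (2 - α)) = (Fintype.card F : ℤ) - χ (-1) := by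
    have hr : ∀ α : F, (1 - χ (2 + α)) * (1 - χ (2 - α))
        = 1 - χ (2 + α) - χ (2 - α) + χ (2 + α) * χ (2 - α) := fun α => by ring
    simp_rw [hr]
    rw [Finset.sum_add_distrib, Finset.sum_sub_distrib, Finset.sum_sub_distrib,
      hsum1, hsum2, hsum3, Finset.sum_const, Finset.card_univ, nsmul_eq_mul, mul_one]
    ring
  have hcount : ∑ α : F, (1 - χ (2 + α)) * (1 - χ (2 - α))
      = 4 * ((Finset.univ.filter P).card : ℤ) := by
    rw [Finset.sum_congr rfl fun α _ => hpoint α, ← Finset.sum_filter,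
      Finset.sum_const, nsmul_eq_mul, mul_comm]
  have key : 4 * ((Finset.univ.filter P).card : ℤ) = (Fintype.card F : ℤ) - χ (-1) :=
    hcount.symm.trans hexp
  have hncard : {α : F | α ≠ 2 ∧ α ≠ -2 ∧ ¬IsSquare (2 + α) ∧ ¬IsSquare (2 - α)}.ncard
      = (Finset.univ.filter P).card := by
    rw [Set.ncard_eq_toFinset_card', Set.toFinset_setOf]
  have hm1 : (-1 : F) ≠ 0 := neg_ne_zero.mpr one_ne_zero
  constructor
  · intro h1
    have hsq : IsSquare (-1 : F) := FiniteField.isSquare_neg_one_iff.mpr (by omega)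
    rw [(quadraticChar_one_iff_isSquare hm1).mpr hsq] at key
    rw [hncard]
    omega
  · intro h3
    have hsq : ¬IsSquare (-1 : F) := fun h =>
      (FiniteField.isSquare_neg_one_iff.mp h) h3
    rw [quadraticChar_neg_one_iff_not_isSquare.mpr hsq] at key
    rw [hncard]
    omega
end

section
/- Let G = PSL₂(q) with q even. Then G contains exactly q² − 1 unipotent elements (elements of order 2), exactly ½·q(q+1)(q−2) semisimple split elements, and exactly ½·q²(q−1) semisimple non-split elements. -/
open Matrix
open scoped MatrixGroups Pointwise

namespace PSL2CountAux

open Polynomial Finset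

set_option linter.unusedSectionVars false
set_option maxHeartbeats 1600000

section general

theorem quad_dvd {K : Type*} [Field K] {a b : K} (hab : a ≠ b) (n : ℕ) (ha : a ^ n = 1)
    (hb : b ^ n = 1) : (X - C a) * (X - C b) ∣ (X ^ n - 1 : K[X]) := by
  apply IsCoprime.mul_dvd
  · exact isCoprime_X_sub_C_of_isUnit_sub (sub_ne_zero_of_ne hab).isUnit
  · rw [dvd_iff_isRoot]; simp [IsRoot, ha]
  · rw [dvd_iff_isRoot]; simp [IsRoot, hb]

theorem root_mul_root {K : Type*} [Field K] [CharP K 2] {t a : K}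
    (hroot : a * a + t * a + 1 = 0) : a * (t + a) = 1 := by
  have h2 : (2 : K) = 0 := CharTwo.two_eq_zero
  linear_combination -hroot + (a*t + a^2)*h2

theorem quad_factor {K : Type*} [Field K] [CharP K 2] {t a : K}
    (hroot : a * a + t * a + 1 = 0) :
    (X ^ 2 + C t * X + 1 : K[X]) = (X - C a) * (X - C (t + a)) := by
  have hC2 : (2 : K[X]) = 0 := CharTwo.two_eq_zero
  have hCp : (C a * (C t + C a) : K[X]) = 1 := by
    rw [← C_add, ← C_mul, root_mul_root hroot, C_1]
  rw [C_add]
  linear_combination (C t + C a) * X * hC2 + hCp + (1 - C t * C a - C a^2) * hC2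

theorem ch_ring {R : Type*} [CommRing R] (m : Matrix (Fin 2) (Fin 2) R) :
    m * m - scalar (Fin 2) (trace m) * m + scalar (Fin 2) (det m) = 0 := by
  ext i j
  fin_cases i <;> fin_cases j <;>
    simp [mul_apply, Fin.sum_univ_two, trace_fin_two, det_fin_two, scalar_apply, one_apply,
      diagonal] <;> ring

end general

variable {F : Type*} [Field F] [Fintype F] [DecidableEq F] [CharP F 2]

local notation "q" => Fintype.card F

theorem ch2 (m : Matrix (Fin 2) (Fin 2) F) (hm : det m = 1) :
    m * m + scalar (Fin 2) (trace m) * m + 1 = 0 := by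
  have h := ch_ring m
  rw [hm, sub_eq_add_neg, CharTwo.neg_eq] at h
  simpa using h

theorem aeval_quad (m : Matrix (Fin 2) (Fin 2) F) (t : F) :
    aeval m (X ^ 2 + C t * X + 1 : F[X]) = m * m + scalar (Fin 2) t * m + 1 := by
  simp [sq, Matrix.scalar]
  rfl

theorem sl_aeval (g : SL(2,F)) :
    aeval (g : Matrix (Fin 2) (Fin 2) F)
      (X ^ 2 + C (trace (g : Matrix (Fin 2) (Fin 2) F)) * X + 1 : F[X]) = 0 := by
  rw [aeval_quad]
  exact ch2 _ g.property

theorem sl_pow_eq_one (g : SL(2,F)) (p : F[X]) (n : ℕ)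
    (hp : aeval (g : Matrix (Fin 2) (Fin 2) F) p = 0) (hdvd : p ∣ X ^ n - 1) : g ^ n = 1 := by
  obtain ⟨c, hc⟩ := hdvd
  have h := congrArg (aeval (g : Matrix (Fin 2) (Fin 2) F)) hc
  simp [hp] at h
  have h2 := sub_eq_zero.mp h
  apply Subtype.ext
  rw [Matrix.SpecialLinearGroup.coe_pow]
  simpa using h2

theorem sl_sq_one_iff (g : SL(2,F)) :
    g * g = 1 ↔ trace (g : Matrix (Fin 2) (Fin 2) F) = 0 := by
  set m : Matrix (Fin 2) (Fin 2) F := (g : Matrix (Fin 2) (Fin 2) F) with hm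
  have hch := ch2 m g.property
  have hu : IsUnit m := by
    apply (Matrix.isUnit_iff_isUnit_det m).mpr
    rw [g.property]
    exact isUnit_one
  constructor
  · intro h
    have hmm : m * m = 1 := by
      rw [hm, ← Matrix.SpecialLinearGroup.coe_mul, h, Matrix.SpecialLinearGroup.coe_one]
    rw [hmm] at hch
    have h2 : (2 : Matrix (Fin 2) (Fin 2) F) = 0 := CharTwo.two_eq_zero
    have hsc : scalar (Fin 2) (trace m) * m = 0 := by
      have h' : scalar (Fin 2) (trace m) * m + 2 = 0 := by
        rw [← hch]
        rw [show (2 : Matrix (Fin 2) (Fin 2) F) = 1 + 1 from one_add_one_eq_two.symm]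
        abel
      rwa [h2, add_zero] at h'
    have hscalar : scalar (Fin 2) (trace m) = 0 :=
      hu.mul_right_cancel (by rw [hsc, zero_mul])
    have := congrFun (congrFun hscalar 0) 0
    simpa using this
  · intro h
    rw [h] at hch
    simp only [map_zero, zero_mul, add_zero] at hch
    apply Subtype.ext
    rw [Matrix.SpecialLinearGroup.coe_mul, Matrix.SpecialLinearGroup.coe_one]
    have hneg : m * m = -1 := eq_neg_of_add_eq_zero_left hch
    rwa [CharTwo.neg_eq] at hneg

theorem split_dvd {t a : F} (ht : t ≠ 0) (ha : a * a + t * a + 1 = 0) :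
    (X ^ 2 + C t * X + 1 : F[X]) ∣ X ^ (q - 1) - 1 := by
  have ha0 : a ≠ 0 := by rintro rfl; simp at ha
  have hb0 : t + a ≠ 0 := by
    intro h
    have h1 := root_mul_root ha
    rw [h, mul_zero] at h1
    exact one_ne_zero h1.symm
  have hab : a ≠ t + a := fun h => ht (by linear_combination -h)
  rw [quad_factor ha]
  exact quad_dvd hab _ (FiniteField.pow_card_sub_one_eq_one a ha0)
    (FiniteField.pow_card_sub_one_eq_one _ hb0)

theorem basic_facts (t : F) :
    (X ^ 2 + C t * X + 1 : F[X]).Monic ∧ (X ^ 2 + C t * X + 1 : F[X]).natDegree = 2 ∧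
    (X ^ 2 + C t * X + 1 : F[X]).coeff 0 = 1 ∧ (X ^ 2 + C t * X + 1 : F[X]).coeff 1 = t := by
  refine ⟨?_, ?_, ?_, ?_⟩
  · monicity!
  · compute_degree!
  · simp [coeff_add, coeff_X_pow, coeff_one, coeff_C_mul]
  · simp [coeff_add, coeff_X_pow, coeff_one, coeff_C_mul]

theorem nonsplit_dvd {t : F} (ht : t ≠ 0) (hno : ∀ a : F, a * a + t * a + 1 ≠ 0) :
    (X ^ 2 + C t * X + 1 : F[X]) ∣ X ^ (q + 1) - 1 := by
  obtain ⟨hmon, hdeg, hc0, hc1⟩ := basic_facts t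
  have h2 : (2 : F) = 0 := CharTwo.two_eq_zero
  have hirr : Irreducible (X ^ 2 + C t * X + 1 : F[X]) := by
    by_contra hred
    obtain ⟨c₁, c₂, hmul, hadd⟩ := (hmon.not_irreducible_iff_exists_add_mul_eq_coeff hdeg).mp hred
    rw [hc0] at hmul; rw [hc1] at hadd
    exact hno c₁ (by linear_combination hmul + c₁ * hadd + (c₁^2 + c₁*c₂) * h2)
  haveI : Fact (Irreducible (X ^ 2 + C t * X + 1 : F[X])) := ⟨hirr⟩
  let K := AdjoinRoot (X ^ 2 + C t * X + 1 : F[X])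
  have hinj : Function.Injective (algebraMap F K) := (algebraMap F K).injective
  haveI : CharP K 2 := charP_of_injective_ringHom hinj 2
  have hK2 : (2 : K) = 0 := CharTwo.two_eq_zero
  let μ : K := AdjoinRoot.root (X ^ 2 + C t * X + 1 : F[X])
  let t' : K := algebraMap F K t
  have haev : (aeval μ) (X ^ 2 + C t * X + 1 : F[X]) = 0 := by
    rw [aeval_def, AdjoinRoot.algebraMap_eq]
    exact AdjoinRoot.eval₂_root _
  have hμ : μ * μ + t' * μ + 1 = 0 := by
    have h0 := haev
    simp only [map_add, _root_.map_mul, map_pow, aeval_X, aeval_C, _root_.map_one, sq] at h0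
    exact h0
  obtain ⟨e, -, hqe⟩ := FiniteField.card F 2
  have hpowq : ∀ x : K, x ^ q = (iterateFrobenius K 2 (e : ℕ)) x := fun x => by
    rw [iterateFrobenius_def, hqe]
  have ht'q : t' ^ q = t' := by
    show (algebraMap F K t) ^ q = algebraMap F K t
    rw [← map_pow, FiniteField.pow_card]
  have hμq : (μ ^ q) * (μ ^ q) + t' * (μ ^ q) + 1 = 0 := by
    have h3 := congrArg (iterateFrobenius K 2 (e : ℕ)) hμ
    rw [map_zero, map_add, map_add, _root_.map_one, _root_.map_mul, _root_.map_mul,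
      ← hpowq, ← hpowq] at h3
    rwa [ht'q] at h3
  have hcases : μ ^ q = μ ∨ μ ^ q = t' + μ := by
    have hfac : (μ ^ q - μ) * (μ ^ q - (t' + μ)) = 0 := by
      linear_combination hμq - hμ + (μ*t' + μ^2 - μ^q*t' - μ*(μ^q)) * hK2
    rcases mul_eq_zero.mp hfac with h | h
    · exact Or.inl (by linear_combination h)
    · exact Or.inr (by linear_combination h)
  have hμq' : μ ^ q = t' + μ := by
    rcases hcases with h | h
    · exfalso
      have hmin : minpoly F μ = (X ^ 2 + C t * X + 1 : F[X]) :=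
        (minpoly.eq_of_irreducible_of_monic hirr haev hmon).symm
      have hdvdq : (X ^ 2 + C t * X + 1 : F[X]) ∣ (X ^ q - X : F[X]) := by
        rw [← hmin]
        apply minpoly.dvd
        simp [map_sub, map_pow, aeval_X, h]
      have hne : (X ^ q - X : F[X]) ≠ 0 :=
        FiniteField.X_pow_card_sub_X_ne_zero F Fintype.one_lt_card
      have hsplits : Splits (X ^ q - X : F[X]) := by
        rw [splits_iff_card_roots, FiniteField.roots_X_pow_card_sub_X,
          FiniteField.X_pow_card_sub_X_natDegree_eq F Fintype.one_lt_card]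
        simp
      have hps : Splits (X ^ 2 + C t * X + 1 : F[X]) :=
        hsplits.of_dvd hne hdvdq
      obtain ⟨a, ha⟩ := hps.exists_eval_eq_zero
        (by rw [degree_eq_natDegree hmon.ne_zero, hdeg]; norm_num)
      apply hno a
      simpa [IsRoot, sq] using ha
    · exact h
  have hprod : μ * (t' + μ) = 1 := root_mul_root hμ
  have hμpow : μ ^ (q + 1) = 1 := by
    rw [pow_succ, hμq']
    linear_combination μ * hμq' - μ * hμq' + hprod
  have hνpow : (t' + μ) ^ (q + 1) = 1 := by
    have h4 := congrArg (· ^ (q+1)) hprod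
    simpa [mul_pow, hμpow] using h4
  have hμν : μ ≠ t' + μ := fun h => by
    have h5 : t' = 0 := by linear_combination -h
    exact ht (hinj (show algebraMap F K t = algebraMap F K 0 by rw [map_zero]; exact h5))
  have hfacK : Polynomial.map (algebraMap F K) (X ^ 2 + C t * X + 1 : F[X])
      = (X - C μ) * (X - C (t' + μ)) := by
    simp only [Polynomial.map_add, Polynomial.map_mul, Polynomial.map_pow, Polynomial.map_one,
      map_X, map_C]
    exact quad_factor hμ
  have hdvdK : Polynomial.map (algebraMap F K) (X ^ 2 + C t * X + 1 : F[X]) ∣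
      Polynomial.map (algebraMap F K) (X ^ (q+1) - 1) := by
    rw [hfacK]
    simp only [Polynomial.map_sub, Polynomial.map_pow, Polynomial.map_one, map_X]
    exact quad_dvd hμν (q+1) hμpow hνpow
  exact (map_dvd_map (algebraMap F K) hinj hmon).mp hdvdK

theorem sl_split_pow (g : SL(2,F)) (ht : trace (g : Matrix (Fin 2) (Fin 2) F) ≠ 0)
    (ha : ∃ a : F, a * a + trace (g : Matrix (Fin 2) (Fin 2) F) * a + 1 = 0) :
    g ^ (q - 1) = 1 := by
  obtain ⟨a, ha⟩ := ha
  exact sl_pow_eq_one g _ _ (sl_aeval g) (split_dvd ht ha)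

theorem sl_nonsplit_pow (g : SL(2,F)) (ht : trace (g : Matrix (Fin 2) (Fin 2) F) ≠ 0)
    (hno : ∀ a : F, a * a + trace (g : Matrix (Fin 2) (Fin 2) F) * a + 1 ≠ 0) :
    g ^ (q + 1) = 1 :=
  sl_pow_eq_one g _ _ (sl_aeval g) (nonsplit_dvd ht hno)

theorem card_ne_zero' : (univ.filter fun b : F => b ≠ 0).card = q - 1 := by
  rw [Finset.filter_ne', card_erase_of_mem (mem_univ _), card_univ]

theorem card_bc (s : F) :
    (univ.filter fun y : F × F => y.1 * y.2 = s).card = (q - 1) + if s = 0 then q else 0 := by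
  rcases eq_or_ne s 0 with rfl | hs
  · rw [if_pos rfl]
    have he : (univ.filter fun y : F × F => y.1 * y.2 = 0)
        = (univ.filter fun y : F × F => y.1 = 0) ∪ (univ.filter fun y : F × F => y.2 = 0) := by
      ext y; simp [mul_eq_zero]
    have h1 : (univ.filter fun y : F × F => y.1 = 0) = {(0 : F)} ×ˢ (univ : Finset F) := by
      ext y; simp [eq_comm, Prod.ext_iff]
    have h2 : (univ.filter fun y : F × F => y.2 = 0) = (univ : Finset F) ×ˢ {(0 : F)} := by
      ext y; simp [eq_comm, Prod.ext_iff]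
    have h3 : (univ.filter fun y : F × F => y.1 = 0) ∩ (univ.filter fun y : F × F => y.2 = 0)
        = {((0 : F), (0 : F))} := by
      ext y; simp [Prod.ext_iff]
    have h4 := Finset.card_union_add_card_inter
      (univ.filter fun y : F × F => y.1 = 0) (univ.filter fun y : F × F => y.2 = 0)
    have hs1 : (univ.filter fun y : F × F => y.1 = 0).card = q := by
      rw [h1]; simp
    have hs2 : (univ.filter fun y : F × F => y.2 = 0).card = q := by
      rw [h2]; simp
    rw [h3, hs1, hs2, card_singleton] at h4
    have hq : 1 ≤ q := Fintype.card_pos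
    rw [he]
    omega
  · rw [if_neg hs]
    have h : (univ.filter fun y : F × F => y.1 * y.2 = s).card
        = (univ.filter fun b : F => b ≠ 0).card := by
      apply Finset.card_bij (fun y _ => y.1)
      · rintro ⟨b, c⟩ hy
        simp only [mem_filter, mem_univ, true_and] at hy ⊢
        rintro rfl; exact hs (by rw [← hy, zero_mul])
      · rintro ⟨b, c⟩ hb ⟨b', c'⟩ hb' (h : b = b')
        simp only [mem_filter, mem_univ, true_and] at hb hb'
        subst h
        have hbne : b ≠ 0 := by rintro rfl; exact hs (by rw [← hb, zero_mul])
        have : c = c' := mul_left_cancel₀ hbne (hb.trans hb'.symm)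
        simp [this]
      · intro b hb
        simp only [mem_filter, mem_univ, true_and] at hb
        exact ⟨(b, b⁻¹ * s), by simp [mem_filter, mul_inv_cancel_left₀ hb], rfl⟩
    rw [h, card_ne_zero', add_zero]

theorem roots0 : (univ.filter fun a : F => a * a + 0 * a + 1 = 0) = {1} := by
  have h2 : (2 : F) = 0 := CharTwo.two_eq_zero
  ext a
  simp only [mem_filter, mem_univ, true_and, mem_singleton]
  constructor
  · intro h
    have hfac : (a - 1) * (a - 1) = 0 := by linear_combination h + (- a) * h2
    have := mul_self_eq_zero.mp hfac
    linear_combination this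
  · rintro rfl
    linear_combination h2

theorem roots_pair {t a : F} (ht : t ≠ 0) (ha : a * a + t * a + 1 = 0) :
    (univ.filter fun x : F => x * x + t * x + 1 = 0) = {a, t + a} := by
  have h2 : (2 : F) = 0 := CharTwo.two_eq_zero
  ext x
  simp only [mem_filter, mem_univ, true_and, mem_insert, mem_singleton]
  constructor
  · intro hx
    have hfac : (x - a) * (x - (t + a)) = 0 := by
      linear_combination hx - ha + (a*t - x*t - x*a + a^2) * h2
    rcases mul_eq_zero.mp hfac with h | h
    · exact Or.inl (by linear_combination h)
    · exact Or.inr (by linear_combination h)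
  · rintro (rfl | rfl)
    · exact ha
    · linear_combination ha + (t^2 + t*a)*h2

theorem card_roots_pair {t a : F} (ht : t ≠ 0) (ha : a * a + t * a + 1 = 0) :
    (univ.filter fun x : F => x * x + t * x + 1 = 0).card = 2 := by
  rw [roots_pair ht ha, card_insert_of_notMem, card_singleton]
  simp only [mem_singleton]
  intro h
  exact ht (by linear_combination -h)

theorem root_iff_sum_inv {t x : F} (hx : x ≠ 0) :
    x * x + t * x + 1 = 0 ↔ x + x⁻¹ = t := by
  have h2 : (2 : F) = 0 := CharTwo.two_eq_zero
  have hinv : x * x⁻¹ = 1 := mul_inv_cancel₀ hx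
  constructor
  · intro h
    have h3 : x * (x + x⁻¹ - t) = 0 := by
      linear_combination h + hinv + (-(t*x))*h2
    rcases mul_eq_zero.mp h3 with h4 | h4
    · exact absurd h4 hx
    · linear_combination h4
  · intro h
    linear_combination x*h - hinv + (t*x)*h2

theorem two_mul_card_Tsp :
    2 * (univ.filter fun t : F => t ≠ 0 ∧ ∃ a : F, a * a + t * a + 1 = 0).card = q - 2 := by
  have h2 : (2 : F) = 0 := CharTwo.two_eq_zero
  set D : Finset F := (univ.erase 0).erase 1 with hD
  have hDcard : D.card = q - 2 := by
    rw [hD, card_erase_of_mem (by simp), card_erase_of_mem (mem_univ _), card_univ]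
    omega
  have hmemD : ∀ a : F, a ∈ D ↔ a ≠ 1 ∧ a ≠ 0 := by
    intro a; simp [hD]
  set Tsp := univ.filter fun t : F => t ≠ 0 ∧ ∃ a : F, a * a + t * a + 1 = 0 with hTsp
  have himg : D.image (fun a => a + a⁻¹) = Tsp := by
    ext t
    simp only [Finset.mem_image, hTsp, mem_filter, mem_univ, true_and]
    constructor
    · rintro ⟨a, haD, rfl⟩
      obtain ⟨ha1, ha0⟩ := (hmemD a).mp haD
      have hroot : a * a + (a + a⁻¹) * a + 1 = 0 := (root_iff_sum_inv ha0).mpr rfl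
      refine ⟨?_, a, hroot⟩
      intro h0
      rw [h0] at hroot
      have : (a - 1) * (a - 1) = 0 := by linear_combination hroot + (-a) * h2
      exact ha1 (by linear_combination mul_self_eq_zero.mp this)
    · rintro ⟨ht, a, ha⟩
      have ha0 : a ≠ 0 := by rintro rfl; simp at ha
      have ha1 : a ≠ 1 := by
        rintro rfl
        exact ht (by linear_combination ha - h2)
      exact ⟨a, (hmemD a).mpr ⟨ha1, ha0⟩, (root_iff_sum_inv ha0).mp ha⟩
  have hfib : ∀ t ∈ Tsp, (D.filter fun a => a + a⁻¹ = t).card = 2 := by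
    intro t htmem
    rw [hTsp, mem_filter] at htmem
    obtain ⟨-, ht, a, ha⟩ := htmem
    have hfeq : (D.filter fun a => a + a⁻¹ = t)
        = univ.filter fun x : F => x * x + t * x + 1 = 0 := by
      ext x
      simp only [mem_filter, mem_univ, true_and]
      constructor
      · rintro ⟨hxD, hx⟩
        exact (root_iff_sum_inv ((hmemD x).mp hxD).2).mpr hx
      · intro hx
        have hx0 : x ≠ 0 := by rintro rfl; simp at hx
        have hx1 : x ≠ 1 := by
          rintro rfl
          exact ht (by linear_combination hx - h2)
        exact ⟨(hmemD x).mpr ⟨hx1, hx0⟩, (root_iff_sum_inv hx0).mp hx⟩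
    rw [hfeq]
    exact card_roots_pair ht ha
  have hsum := Finset.card_eq_sum_card_image (fun a : F => a + a⁻¹) D
  rw [himg] at hsum
  rw [Finset.sum_congr rfl hfib] at hsum
  rw [Finset.sum_const, smul_eq_mul] at hsum
  omega

theorem card_trace_fiber (t : F) :
    (univ.filter fun g : SL(2,F) => trace (g : Matrix (Fin 2) (Fin 2) F) = t).card
      = q * (q - 1) + (univ.filter fun a : F => a * a + t * a + 1 = 0).card * q := by
  have h2 : (2 : F) = 0 := CharTwo.two_eq_zero
  have hbij : (univ.filter fun g : SL(2,F) => trace (g : Matrix (Fin 2) (Fin 2) F) = t).card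
      = (univ.filter fun x : F × F × F => x.2.1 * x.2.2 = 1 + x.1 * (t + x.1)).card := by
    refine Finset.card_bij' (fun g _ => (((g : Matrix (Fin 2) (Fin 2) F) 0 0),
        ((g : Matrix (Fin 2) (Fin 2) F) 0 1), ((g : Matrix (Fin 2) (Fin 2) F) 1 0)))
      (fun x hx => (⟨!![x.1, x.2.1; x.2.2, t + x.1], by
        simp only [mem_filter, mem_univ, true_and] at hx
        rw [det_fin_two_of]
        linear_combination -hx - h2⟩ : SL(2,F))) ?_ ?_ ?_ ?_
    · intro g hg
      simp only [mem_filter, mem_univ, true_and] at hg ⊢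
      have hdet := g.property
      rw [det_fin_two] at hdet
      rw [trace_fin_two] at hg
      have hd : (g : Matrix (Fin 2) (Fin 2) F) 1 1 = t + (g : Matrix (Fin 2) (Fin 2) F) 0 0 := by
        linear_combination -hg + ((g : Matrix (Fin 2) (Fin 2) F) 1 1 - t) * h2
      rw [← hd]
      linear_combination -hdet - h2
    · intro x hx
      refine mem_filter.mpr ⟨mem_univ _, ?_⟩
      show trace !![x.1, x.2.1; x.2.2, t + x.1] = t
      rw [trace_fin_two_of]
      linear_combination x.1 * h2
    · intro g hg
      apply Subtype.ext
      simp only [mem_filter, mem_univ, true_and] at hg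
      rw [trace_fin_two] at hg
      ext i j
      fin_cases i <;> fin_cases j <;>
        simp [cons_val', cons_val_zero, cons_val_one, head_cons]
      linear_combination -hg + ((g : Matrix (Fin 2) (Fin 2) F) 0 0) * h2
    · intro x hx
      simp
  rw [hbij, Finset.card_filter]
  rw [Fintype.sum_prod_type]
  have hstep : ∀ a : F, (∑ y : F × F, if y.1 * y.2 = 1 + a * (t + a) then 1 else 0)
      = (q - 1) + if 1 + a * (t + a) = 0 then q else 0 := by
    intro a
    rw [← Finset.card_filter, card_bc]
  simp only [hstep]
  rw [Finset.sum_add_distrib, Finset.sum_const, card_univ, smul_eq_mul]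
  have hsum2 : (∑ a : F, if 1 + a * (t + a) = 0 then q else 0)
      = (univ.filter fun a : F => a * a + t * a + 1 = 0).card * q := by
    rw [← Finset.sum_filter, Finset.sum_const, smul_eq_mul]
    have hset : (univ.filter fun a : F => 1 + a * (t + a) = 0)
        = (univ.filter fun a : F => a * a + t * a + 1 = 0) := by
      ext a
      simp only [mem_filter, mem_univ, true_and]
      constructor
      · intro h; linear_combination h
      · intro h; linear_combination h
    rw [hset]
  rw [hsum2]

instance : DecidableEq (SL(2,F)) :=
  fun A B => decidable_of_iff (A.val = B.val) Subtype.ext_iff.symm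

theorem card_sl_order_two :
    (univ.filter fun g : SL(2,F) => g * g = 1 ∧ g ≠ 1).card = q ^ 2 - 1 := by
  have hq2 : q * (q - 1) + 1 * q = q ^ 2 := by
    obtain ⟨k, hk⟩ : ∃ k, q = k + 1 := ⟨q - 1, by have := Fintype.card_pos (α := F); omega⟩
    rw [hk]
    simp only [Nat.add_sub_cancel]
    ring
  have hset : (univ.filter fun g : SL(2,F) => g * g = 1 ∧ g ≠ 1)
      = (univ.filter fun g : SL(2,F) =>
          trace (g : Matrix (Fin 2) (Fin 2) F) = (0 : F)).erase 1 := by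
    ext g
    simp only [mem_filter, mem_univ, true_and, mem_erase, sl_sq_one_iff]
    tauto
  have hone : (1 : SL(2,F)) ∈ (univ.filter fun g : SL(2,F) =>
      trace (g : Matrix (Fin 2) (Fin 2) F) = (0 : F)) := by
    simp only [mem_filter, mem_univ, true_and, Matrix.SpecialLinearGroup.coe_one]
    have h2 : (2 : F) = 0 := CharTwo.two_eq_zero
    rw [trace_one]
    simpa using h2
  rw [hset, card_erase_of_mem hone, card_trace_fiber 0, roots0, card_singleton]
  omega

theorem card_sl_split :
    (univ.filter fun g : SL(2,F) => g ^ (q - 1) = 1 ∧ ¬(g * g = 1)).card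
      = (univ.filter fun t : F => t ≠ 0 ∧ ∃ a : F, a * a + t * a + 1 = 0).card
        * (q * (q - 1) + 2 * q) := by
  have hq1 : 1 ≤ q := Fintype.card_pos
  set Tsp := univ.filter fun t : F => t ≠ 0 ∧ ∃ a : F, a * a + t * a + 1 = 0 with hTsp
  have hset : (univ.filter fun g : SL(2,F) => g ^ (q - 1) = 1 ∧ ¬(g * g = 1))
      = univ.filter fun g : SL(2,F) => trace (g : Matrix (Fin 2) (Fin 2) F) ∈ Tsp := by
    ext g
    simp only [mem_filter, mem_univ, true_and, hTsp]
    constructor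
    · rintro ⟨h1, h2⟩
      have ht : trace (g : Matrix (Fin 2) (Fin 2) F) ≠ 0 :=
        fun h0 => h2 ((sl_sq_one_iff g).mpr h0)
      refine ⟨ht, ?_⟩
      by_contra hno
      push_neg at hno
      have h3 : g ^ (q + 1) = 1 := sl_nonsplit_pow g ht hno
      have h4 : g ^ (q + 1) = g ^ (q - 1) * g ^ 2 := by
        rw [← pow_add]
        congr 1
        omega
      rw [h3, h1, one_mul] at h4
      exact h2 (by rw [← pow_two g]; exact h4.symm)
    · rintro ⟨ht, ha⟩
      exact ⟨sl_split_pow g ht ha, fun h => ht ((sl_sq_one_iff g).mp h)⟩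
  rw [hset]
  rw [Finset.card_eq_sum_card_fiberwise
    (f := fun g : SL(2,F) => trace (g : Matrix (Fin 2) (Fin 2) F)) (t := Tsp)
    (s := univ.filter fun g : SL(2,F) => trace (g : Matrix (Fin 2) (Fin 2) F) ∈ Tsp)
    (fun g hg => (mem_filter.mp hg).2)]
  have hfib : ∀ t ∈ Tsp, ((univ.filter fun g : SL(2,F) =>
      trace (g : Matrix (Fin 2) (Fin 2) F) ∈ Tsp).filter
        fun g : SL(2,F) => trace (g : Matrix (Fin 2) (Fin 2) F) = t).card = q * (q - 1) + 2 * q := by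
    intro t htT
    have h5 := mem_filter.mp htT
    obtain ⟨ht0, a, ha⟩ := h5.2
    have hfeq : ((univ.filter fun g : SL(2,F) =>
        trace (g : Matrix (Fin 2) (Fin 2) F) ∈ Tsp).filter
          fun g : SL(2,F) => trace (g : Matrix (Fin 2) (Fin 2) F) = t)
        = univ.filter fun g : SL(2,F) => trace (g : Matrix (Fin 2) (Fin 2) F) = t := by
      ext g
      simp only [mem_filter, mem_univ, true_and]
      constructor
      · rintro ⟨-, h⟩; exact h
      · intro h; exact ⟨by rw [h]; exact htT, h⟩
    rw [hfeq, card_trace_fiber t, card_roots_pair ht0 ha]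
  rw [Finset.sum_congr rfl hfib, Finset.sum_const, smul_eq_mul]

theorem card_sl_nonsplit :
    (univ.filter fun g : SL(2,F) => g ^ (q + 1) = 1 ∧ ¬(g * g = 1)).card
      = (univ.filter fun t : F => t ≠ 0 ∧ ∀ a : F, a * a + t * a + 1 ≠ 0).card
        * (q * (q - 1)) := by
  have hq1 : 1 ≤ q := Fintype.card_pos
  set Tns := univ.filter fun t : F => t ≠ 0 ∧ ∀ a : F, a * a + t * a + 1 ≠ 0 with hTns
  have hset : (univ.filter fun g : SL(2,F) => g ^ (q + 1) = 1 ∧ ¬(g * g = 1))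
      = univ.filter fun g : SL(2,F) => trace (g : Matrix (Fin 2) (Fin 2) F) ∈ Tns := by
    ext g
    simp only [mem_filter, mem_univ, true_and, hTns]
    constructor
    · rintro ⟨h1, h2⟩
      have ht : trace (g : Matrix (Fin 2) (Fin 2) F) ≠ 0 :=
        fun h0 => h2 ((sl_sq_one_iff g).mpr h0)
      refine ⟨ht, ?_⟩
      intro a ha
      have h3 : g ^ (q - 1) = 1 := sl_split_pow g ht ⟨a, ha⟩
      have h4 : g ^ (q + 1) = g ^ (q - 1) * g ^ 2 := by
        rw [← pow_add]
        congr 1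
        omega
      rw [h3, h1, one_mul] at h4
      exact h2 (by rw [← pow_two g]; exact h4.symm)
    · rintro ⟨ht, hno⟩
      exact ⟨sl_nonsplit_pow g ht hno, fun h => ht ((sl_sq_one_iff g).mp h)⟩
  rw [hset]
  rw [Finset.card_eq_sum_card_fiberwise
    (f := fun g : SL(2,F) => trace (g : Matrix (Fin 2) (Fin 2) F)) (t := Tns)
    (s := univ.filter fun g : SL(2,F) => trace (g : Matrix (Fin 2) (Fin 2) F) ∈ Tns)
    (fun g hg => (mem_filter.mp hg).2)]
  have hfib : ∀ t ∈ Tns, ((univ.filter fun g : SL(2,F) =>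
      trace (g : Matrix (Fin 2) (Fin 2) F) ∈ Tns).filter
        fun g : SL(2,F) => trace (g : Matrix (Fin 2) (Fin 2) F) = t).card = q * (q - 1) := by
    intro t htT
    have h5 := mem_filter.mp htT
    have hno : ∀ a : F, a * a + t * a + 1 ≠ 0 := h5.2.2
    have hfeq : ((univ.filter fun g : SL(2,F) =>
        trace (g : Matrix (Fin 2) (Fin 2) F) ∈ Tns).filter
          fun g : SL(2,F) => trace (g : Matrix (Fin 2) (Fin 2) F) = t)
        = univ.filter fun g : SL(2,F) => trace (g : Matrix (Fin 2) (Fin 2) F) = t := by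
      ext g
      simp only [mem_filter, mem_univ, true_and]
      constructor
      · rintro ⟨-, h⟩; exact h
      · intro h; exact ⟨by rw [h]; exact htT, h⟩
    have hempty : (univ.filter fun x : F => x * x + t * x + 1 = 0) = ∅ :=
      Finset.filter_eq_empty_iff.mpr (fun x _ => hno x)
    rw [hfeq, card_trace_fiber t, hempty, card_empty, zero_mul, add_zero]
  rw [Finset.sum_congr rfl hfib, Finset.sum_const, smul_eq_mul]

noncomputable def slEquivPsl : SL(2,F) ≃* PSL(2,F) := by
  have hcen : Subgroup.center (SL(2,F)) = ⊥ := by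
    rw [eq_bot_iff]
    intro A hA
    obtain ⟨r, hr1, hr2⟩ := Matrix.SpecialLinearGroup.mem_center_iff.mp hA
    rw [Fintype.card_fin] at hr1
    have hr : r = 1 := by
      have h2 : (2 : F) = 0 := CharTwo.two_eq_zero
      have : (r - 1) * (r - 1) = 0 := by linear_combination hr1 - r * h2 + h2
      have := mul_self_eq_zero.mp this
      linear_combination this
    rw [Subgroup.mem_bot]
    apply Subtype.ext
    rw [← hr2, hr]
    simp
  exact ((QuotientGroup.quotientMulEquivOfEq hcen).trans
    (QuotientGroup.quotientBot (G := SL(2,F)))).symm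

theorem psl_set_ncard (P : PSL(2,F) → Prop) :
    {x : PSL(2,F) | P x}.ncard = {g : SL(2,F) | P (slEquivPsl g)}.ncard := by
  rw [show {x : PSL(2,F) | P x} = slEquivPsl '' {g : SL(2,F) | P (slEquivPsl g)} by
    ext x
    simp only [Set.mem_image, Set.mem_setOf_eq]
    constructor
    · intro hx
      exact ⟨slEquivPsl.symm x, by simpa using hx, by simp⟩
    · rintro ⟨g, hg, rfl⟩; exact hg]
  exact Set.ncard_image_of_injective _ (MulEquiv.injective _)

theorem orderOf_slEquivPsl (g : SL(2,F)) : orderOf (slEquivPsl g) = orderOf g :=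
  orderOf_injective (slEquivPsl (F := F)).toMonoidHom (MulEquiv.injective _) g

end PSL2CountAux

open PSL2CountAux in
/-- For `G = PSL₂(q)`, `q` even: `G` has exactly `q² - 1` unipotent elements
(elements of order 2), `q(q+1)(q-2)/2` semisimple split elements, and `q²(q-1)/2`
semisimple non-split elements. -/
theorem psl2_even_count_elements
    {F : Type*} [Field F] [Fintype F] [DecidableEq F] [CharP F 2] :
    {g : PSL(2, F) | orderOf g = 2}.ncard = Fintype.card F ^ 2 - 1 ∧
    {g : PSL(2, F) | g ≠ 1 ∧ orderOf g ≠ 2 ∧ orderOf g ∣ Fintype.card F - 1}.ncard =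
      Fintype.card F * (Fintype.card F + 1) * (Fintype.card F - 2) / 2 ∧
    {g : PSL(2, F) | g ≠ 1 ∧ orderOf g ≠ 2 ∧ orderOf g ∣ Fintype.card F + 1}.ncard =
      Fintype.card F ^ 2 * (Fintype.card F - 1) / 2 := by
  classical
  haveI : Fact (Nat.Prime 2) := ⟨Nat.prime_two⟩
  have hq1 : 1 < Fintype.card F := Fintype.one_lt_card
  obtain ⟨e, -, hqe⟩ := FiniteField.card F 2
  have hepos : 0 < (e : ℕ) := e.pos
  have hm : Fintype.card F = 2 * 2 ^ ((e : ℕ) - 1) := by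
    rw [hqe, ← pow_succ']
    congr 1
    omega
  set m := 2 ^ ((e : ℕ) - 1) with hmdef
  have hm1 : 1 ≤ m := Nat.one_le_two_pow
  have h2T := two_mul_card_Tsp (F := F)
  have hTns_eq : (Finset.univ.filter fun t : F => t ≠ 0 ∧ ∀ a : F, a * a + t * a + 1 ≠ 0)
      = (Finset.univ.filter fun t : F => t ≠ 0 ∧ ¬∃ a : F, a * a + t * a + 1 = 0) := by
    ext t; simp [not_exists]
  have hTT : (Finset.univ.filter fun t : F => t ≠ 0 ∧ ∃ a : F, a * a + t * a + 1 = 0).card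
      + (Finset.univ.filter fun t : F => t ≠ 0 ∧ ∀ a : F, a * a + t * a + 1 ≠ 0).card
      = Fintype.card F - 1 := by
    have h3 := Finset.card_filter_add_card_filter_not
      (s := Finset.univ.filter fun t : F => t ≠ 0)
      (p := fun t : F => ∃ a : F, a * a + t * a + 1 = 0)
    rw [Finset.filter_filter, Finset.filter_filter, card_ne_zero'] at h3
    rw [hTns_eq]
    exact h3
  have hTsp_card : (Finset.univ.filter fun t : F =>
      t ≠ 0 ∧ ∃ a : F, a * a + t * a + 1 = 0).card = m - 1 := by omega
  have hTns_card : (Finset.univ.filter fun t : F =>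
      t ≠ 0 ∧ ∀ a : F, a * a + t * a + 1 ≠ 0).card = m := by omega
  refine ⟨?_, ?_, ?_⟩
  · rw [psl_set_ncard]
    have e1 : {g : SL(2,F) | orderOf (slEquivPsl g) = 2}
        = ↑(Finset.univ.filter fun g : SL(2,F) => g * g = 1 ∧ g ≠ 1) := by
      ext g
      simp only [Set.mem_setOf_eq, Finset.mem_coe, Finset.mem_filter, Finset.mem_univ, true_and,
        orderOf_slEquivPsl]
      constructor
      · intro h
        constructor
        · have hp := pow_orderOf_eq_one g
          rw [h, pow_two] at hp
          exact hp
        · intro hg1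
          rw [hg1, orderOf_one] at h
          norm_num at h
      · rintro ⟨hsq, hne⟩
        exact orderOf_eq_prime (by rw [sq]; exact hsq) hne
    rw [e1, Set.ncard_coe_finset, card_sl_order_two]
  · rw [psl_set_ncard]
    have e2 : {g : SL(2,F) | slEquivPsl g ≠ 1 ∧ orderOf (slEquivPsl g) ≠ 2 ∧
          orderOf (slEquivPsl g) ∣ Fintype.card F - 1}
        = ↑(Finset.univ.filter fun g : SL(2,F) =>
            g ^ (Fintype.card F - 1) = 1 ∧ ¬(g * g = 1)) := by
      ext g
      simp only [Set.mem_setOf_eq, Finset.mem_coe, Finset.mem_filter, Finset.mem_univ, true_and,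
        orderOf_slEquivPsl, ne_eq]
      constructor
      · rintro ⟨h1, h2, h3⟩
        refine ⟨orderOf_dvd_iff_pow_eq_one.mp h3, ?_⟩
        intro hsq
        have hdvd2 : orderOf g ∣ 2 :=
          orderOf_dvd_iff_pow_eq_one.mpr (by rw [pow_two]; exact hsq)
        rcases (Nat.prime_two).eq_one_or_self_of_dvd _ hdvd2 with h | h
        · exact h1 (by rw [orderOf_eq_one_iff.mp h, _root_.map_one])
        · exact h2 h
      · rintro ⟨hpow, hsq⟩
        have hne : g ≠ 1 := by rintro rfl; exact hsq (one_mul 1)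
        refine ⟨?_, ?_, orderOf_dvd_iff_pow_eq_one.mpr hpow⟩
        · intro h
          exact hne (slEquivPsl.injective (by rw [h, _root_.map_one]))
        · intro h2
          apply hsq
          have hp := pow_orderOf_eq_one g
          rw [h2, pow_two] at hp
          exact hp
    rw [e2, Set.ncard_coe_finset, card_sl_split, hTsp_card]
    have hqq : Fintype.card F * (Fintype.card F - 1) + 2 * Fintype.card F
        = Fintype.card F * (Fintype.card F + 1) := by
      obtain ⟨k, hk⟩ : ∃ k, Fintype.card F = k + 1 := ⟨Fintype.card F - 1, by omega⟩
      rw [hk]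
      simp only [Nat.add_sub_cancel]
      ring
    rw [hqq, show Fintype.card F * (Fintype.card F + 1) * (Fintype.card F - 2)
        = (m - 1) * (Fintype.card F * (Fintype.card F + 1)) * 2 from by
      rw [show Fintype.card F - 2 = 2 * (m - 1) from by omega]; ring]
    rw [Nat.mul_div_cancel _ two_pos]
  · rw [psl_set_ncard]
    have e3 : {g : SL(2,F) | slEquivPsl g ≠ 1 ∧ orderOf (slEquivPsl g) ≠ 2 ∧
          orderOf (slEquivPsl g) ∣ Fintype.card F + 1}
        = ↑(Finset.univ.filter fun g : SL(2,F) =>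
            g ^ (Fintype.card F + 1) = 1 ∧ ¬(g * g = 1)) := by
      ext g
      simp only [Set.mem_setOf_eq, Finset.mem_coe, Finset.mem_filter, Finset.mem_univ, true_and,
        orderOf_slEquivPsl, ne_eq]
      constructor
      · rintro ⟨h1, h2, h3⟩
        refine ⟨orderOf_dvd_iff_pow_eq_one.mp h3, ?_⟩
        intro hsq
        have hdvd2 : orderOf g ∣ 2 :=
          orderOf_dvd_iff_pow_eq_one.mpr (by rw [pow_two]; exact hsq)
        rcases (Nat.prime_two).eq_one_or_self_of_dvd _ hdvd2 with h | h
        · exact h1 (by rw [orderOf_eq_one_iff.mp h, _root_.map_one])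
        · exact h2 h
      · rintro ⟨hpow, hsq⟩
        have hne : g ≠ 1 := by rintro rfl; exact hsq (one_mul 1)
        refine ⟨?_, ?_, orderOf_dvd_iff_pow_eq_one.mpr hpow⟩
        · intro h
          exact hne (slEquivPsl.injective (by rw [h, _root_.map_one]))
        · intro h2
          apply hsq
          have hp := pow_orderOf_eq_one g
          rw [h2, pow_two] at hp
          exact hp
    rw [e3, Set.ncard_coe_finset, card_sl_nonsplit, hTns_card]
    rw [show Fintype.card F ^ 2 * (Fintype.card F - 1)
        = m * (Fintype.card F * (Fintype.card F - 1)) * 2 from by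
      rw [pow_two]; nth_rewrite 1 [hm]; ring]
    rw [Nat.mul_div_cancel _ two_pos]
end
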